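/- arXiv:math/0411147 — 6 statements merged into one kernel-verified Lean document; each statement's English description precedes it below -/
import Mathlib

section
/- For n ≥ 1 and distinct complex numbers z₁,…,zₙ, the triple sum ∑_{r=1}^{n} ∑_{1 ≤ s₁ < s₂ ≤ n, s₁,s₂ ≠ r} z_r² / ((z_{s₁} - z_r)(z_{s₂} - z_r)) equals (n-1)n(n-2)/6, i.e. the binomial coefficient (n choose 3). -/
lemma three_term (x y w : ℂ) (hxy : x ≠ y) (hxw : x ≠ w) (hyw : y ≠ w) :
    x^2/((y-x)*(w-x)) + y^2/((x-y)*(w-y)) + w^2/((x-w)*(y-w)) = 1 := by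
  have h1 : y - x ≠ 0 := sub_ne_zero.2 (Ne.symm hxy)
  have h2 : w - x ≠ 0 := sub_ne_zero.2 (Ne.symm hxw)
  have h3 : x - y ≠ 0 := sub_ne_zero.2 hxy
  have h4 : w - y ≠ 0 := sub_ne_zero.2 (Ne.symm hyw)
  have h5 : x - w ≠ 0 := sub_ne_zero.2 hxw
  have h6 : y - w ≠ 0 := sub_ne_zero.2 hyw
  field_simp
  ring

lemma sorted_of_distinct {n : ℕ} (a b c : Fin n) (hab : a ≠ b) (hac : a ≠ c) (hbc : b ≠ c) :
    ∃ x y w : Fin n, x < y ∧ y < w ∧ ({x, y, w} : Finset (Fin n)) = {a, b, c} := by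
  rcases lt_trichotomy a b with h1 | h1 | h1
  · rcases lt_trichotomy b c with h2 | h2 | h2
    · exact ⟨a, b, c, h1, h2, rfl⟩
    · exact absurd h2 hbc
    · rcases lt_trichotomy a c with h3 | h3 | h3
      · exact ⟨a, c, b, h3, h2, by ext x; simp; tauto⟩
      · exact absurd h3 hac
      · exact ⟨c, a, b, h3, h1, by ext x; simp; tauto⟩
  · exact absurd h1 hab
  · rcases lt_trichotomy a c with h2 | h2 | h2
    · exact ⟨b, a, c, h1, h2, by ext x; simp; tauto⟩
    · exact absurd h2 hac
    · rcases lt_trichotomy b c with h3 | h3 | h3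
      · exact ⟨b, c, a, h3, h2, by ext x; simp; tauto⟩
      · exact absurd h3 hbc
      · exact ⟨c, b, a, h3, h1, by ext x; simp; tauto⟩

lemma card_sorted_triples (n : ℕ) :
    ((Finset.univ.filter fun t : Fin n × Fin n × Fin n => t.1 < t.2.1 ∧ t.2.1 < t.2.2)).card
      = n.choose 3 := by
  classical
  have h := Finset.card_powersetCard 3 (Finset.univ : Finset (Fin n))
  rw [Finset.card_univ, Fintype.card_fin] at h
  rw [← h]
  apply Finset.card_bij (fun t _ => ({t.1, t.2.1, t.2.2} : Finset (Fin n)))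
  · rintro ⟨a, b, c⟩ ht
    simp only [Finset.mem_filter] at ht
    obtain ⟨-, h1, h2⟩ := ht
    simp only [Finset.mem_powersetCard]
    refine ⟨Finset.subset_univ _, ?_⟩
    rw [Finset.card_insert_of_notMem, Finset.card_insert_of_notMem, Finset.card_singleton]
    · simp [h2.ne]
    · simp [h1.ne, (h1.trans h2).ne]
  · rintro ⟨a, b, c⟩ ht ⟨a', b', c'⟩ ht' heq
    simp only [Finset.mem_filter] at ht ht'
    obtain ⟨-, h1, h2⟩ := ht
    obtain ⟨-, h1', h2'⟩ := ht'
    have hmem : ∀ x : Fin n, (x = a ∨ x = b ∨ x = c) ↔ (x = a' ∨ x = b' ∨ x = c') := by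
      intro x
      have := Finset.ext_iff.1 heq x
      simpa using this
    have ha := (hmem a).1 (Or.inl rfl)
    have hb := (hmem b).1 (Or.inr (Or.inl rfl))
    have hc := (hmem c).1 (Or.inr (Or.inr rfl))
    have ha' := (hmem a').2 (Or.inl rfl)
    have hb' := (hmem b').2 (Or.inr (Or.inl rfl))
    have hc' := (hmem c').2 (Or.inr (Or.inr rfl))
    simp only [Prod.mk.injEq]
    rw [Fin.lt_def] at h1 h2 h1' h2'
    simp only [Fin.ext_iff] at ha hb hc ha' hb' hc' ⊢
    omega
  · intro s hs
    simp only [Finset.mem_powersetCard] at hs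
    obtain ⟨a, b, c, hab, hac, hbc, rfl⟩ := Finset.card_eq_three.1 hs.2
    obtain ⟨x, y, w, hxy, hyw, hset⟩ := sorted_of_distinct a b c hab hac hbc
    exact ⟨(x, y, w), by simp [Finset.mem_filter, hxy, hyw], hset⟩

/-- For pairwise distinct complex `z₁,…,zₙ` (n ≥ 1),
`∑_{r} ∑_{s₁<s₂, s₁,s₂≠r} z_r²/((z_{s₁}-z_r)(z_{s₂}-z_r)) = (n choose 3)`. -/
theorem sum_ratio_eq_choose_three (n : ℕ) (hn : 1 ≤ n) (z : Fin n → ℂ)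
    (hz : Function.Injective z) :
    ∑ r : Fin n, ∑ p ∈ Finset.univ.filter
        (fun p : Fin n × Fin n => p.1 < p.2 ∧ p.1 ≠ r ∧ p.2 ≠ r),
      z r ^ 2 / ((z p.1 - z r) * (z p.2 - z r))
    = (n.choose 3 : ℂ) := by
  classical
  have hstep : ∑ r : Fin n, ∑ p ∈ Finset.univ.filter
        (fun p : Fin n × Fin n => p.1 < p.2 ∧ p.1 ≠ r ∧ p.2 ≠ r),
      z r ^ 2 / ((z p.1 - z r) * (z p.2 - z r))
    = ∑ t ∈ (Finset.univ.filter fun t : Fin n × Fin n × Fin n =>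
        t.2.1 < t.2.2 ∧ t.2.1 ≠ t.1 ∧ t.2.2 ≠ t.1),
      z t.1 ^ 2 / ((z t.2.1 - z t.1) * (z t.2.2 - z t.1)) := by
    simp_rw [Finset.sum_filter]
    rw [Fintype.sum_prod_type]
  rw [hstep]
  set F : Fin n × Fin n × Fin n → ℂ :=
    fun t => z t.1 ^ 2 / ((z t.2.1 - z t.1) * (z t.2.2 - z t.1)) with hF
  set A : Finset (Fin n × Fin n × Fin n) :=
    Finset.univ.filter (fun t => t.2.1 < t.2.2 ∧ t.2.1 ≠ t.1 ∧ t.2.2 ≠ t.1) with hA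
  set C : Finset (Fin n × Fin n × Fin n) :=
    Finset.univ.filter (fun t => t.1 < t.2.1 ∧ t.2.1 < t.2.2) with hC
  have hsplit : ∑ t ∈ A, F t =
      ∑ t ∈ A.filter (fun t => t.1 < t.2.1), F t +
      ∑ t ∈ A.filter (fun t => t.2.1 < t.1 ∧ t.1 < t.2.2), F t +
      ∑ t ∈ A.filter (fun t => t.2.2 < t.1), F t := by
    rw [← Finset.sum_filter_add_sum_filter_not A (fun t => t.1 < t.2.1) F]
    have e2 : A.filter (fun t => ¬ t.1 < t.2.1) =
        A.filter (fun t => t.2.1 < t.1 ∧ t.1 < t.2.2) ∪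
        A.filter (fun t => t.2.2 < t.1) := by
      ext ⟨a, b, c⟩
      simp only [hA, Finset.mem_union, Finset.mem_filter, Finset.mem_univ, true_and,
        Fin.lt_def, Ne, Fin.ext_iff]
      omega
    rw [e2, Finset.sum_union]
    · ring
    · rw [Finset.disjoint_filter]
      rintro ⟨a, b, c⟩ - ⟨h1, h2⟩ h3
      exact absurd (h2.trans h3) (lt_irrefl _)
  have hS1 : ∑ t ∈ A.filter (fun t => t.1 < t.2.1), F t = ∑ t ∈ C, F t := by
    congr 1
    ext ⟨a, b, c⟩
    simp only [hA, hC, Finset.mem_filter, Finset.mem_univ, true_and, Fin.lt_def, Ne, Fin.ext_iff]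
    omega
  have hS2 : ∑ t ∈ A.filter (fun t => t.2.1 < t.1 ∧ t.1 < t.2.2), F t =
      ∑ t ∈ C, z t.2.1 ^ 2 / ((z t.1 - z t.2.1) * (z t.2.2 - z t.2.1)) := by
    apply Finset.sum_nbij' (fun t => (t.2.1, t.1, t.2.2)) (fun t => (t.2.1, t.1, t.2.2))
    · rintro ⟨a, b, c⟩ ht
      simp only [hA, hC, Finset.mem_filter, Finset.mem_univ, true_and, Fin.lt_def, Ne,
        Fin.ext_iff] at ht ⊢
      omega
    · rintro ⟨a, b, c⟩ ht
      simp only [hA, hC, Finset.mem_filter, Finset.mem_univ, true_and, Fin.lt_def, Ne,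
        Fin.ext_iff] at ht ⊢
      omega
    · rintro ⟨a, b, c⟩ -; rfl
    · rintro ⟨a, b, c⟩ -; rfl
    · rintro ⟨a, b, c⟩ -; rfl
  have hS3 : ∑ t ∈ A.filter (fun t => t.2.2 < t.1), F t =
      ∑ t ∈ C, z t.2.2 ^ 2 / ((z t.1 - z t.2.2) * (z t.2.1 - z t.2.2)) := by
    apply Finset.sum_nbij' (fun t => (t.2.1, t.2.2, t.1)) (fun t => (t.2.2, t.1, t.2.1))
    · rintro ⟨a, b, c⟩ ht
      simp only [hA, hC, Finset.mem_filter, Finset.mem_univ, true_and, Fin.lt_def, Ne,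
        Fin.ext_iff] at ht ⊢
      omega
    · rintro ⟨a, b, c⟩ ht
      simp only [hA, hC, Finset.mem_filter, Finset.mem_univ, true_and, Fin.lt_def, Ne,
        Fin.ext_iff] at ht ⊢
      omega
    · rintro ⟨a, b, c⟩ -; rfl
    · rintro ⟨a, b, c⟩ -; rfl
    · rintro ⟨a, b, c⟩ -; rfl
  rw [hsplit, hS1, hS2, hS3, ← Finset.sum_add_distrib, ← Finset.sum_add_distrib]
  have hone : ∀ t ∈ C, F t + z t.2.1 ^ 2 / ((z t.1 - z t.2.1) * (z t.2.2 - z t.2.1))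
      + z t.2.2 ^ 2 / ((z t.1 - z t.2.2) * (z t.2.1 - z t.2.2)) = 1 := by
    rintro ⟨a, b, c⟩ ht
    simp only [hC, Finset.mem_filter, Finset.mem_univ, true_and] at ht
    obtain ⟨h1, h2⟩ := ht
    exact three_term (z a) (z b) (z c)
      (fun h => absurd (hz h) h1.ne)
      (fun h => absurd (hz h) (h1.trans h2).ne)
      (fun h => absurd (hz h) h2.ne)
  rw [Finset.sum_congr rfl hone, Finset.sum_const, nsmul_eq_mul, mul_one, hC,
    card_sorted_triples]
end

section
/- The Vandermonde determinant W(z₁,…,zₙ) = ∏_{1≤i<j≤n}(z_i - z_j), viewed as a function of complex variables, satisfies ∑_{i=1}^n (z_i ∂_{z_i})² (W) = ((n-1)n(2n-1)/6) · W. -/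
/-- The operator `z_r ∂_{z_r}` on complex functions of `n` complex variables. -/
noncomputable def zDc {n : ℕ} (r : Fin n) (f : (Fin n → ℂ) → ℂ) : (Fin n → ℂ) → ℂ :=
  fun z => z r * deriv (fun t => f (Function.update z r t)) (z r)

/-- The Vandermonde function `W(z) = ∏_{i<j} (z_i - z_j)`. -/
def vandermondeW (n : ℕ) : (Fin n → ℂ) → ℂ :=
  fun z => ∏ p ∈ Finset.univ.filter (fun p : Fin n × Fin n => p.1 < p.2), (z p.1 - z p.2)

open Finset

lemma prod_update_pow {n : ℕ} (z : Fin n → ℂ) (r : Fin n) (t : ℂ) (e : Fin n → ℕ) :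
    ∏ j, (Function.update z r t j) ^ e j = t ^ e r * ∏ j ∈ univ.erase r, z j ^ e j := by
  rw [← Finset.mul_prod_erase univ _ (Finset.mem_univ r), Function.update_self]
  congr 1
  refine Finset.prod_congr rfl fun j hj => ?_
  rw [Function.update_of_ne (Finset.ne_of_mem_erase hj)]

lemma zDc_sum {n : ℕ} {ι : Type*} [Fintype ι] (c : ι → ℂ) (e : ι → Fin n → ℕ) (r : Fin n) :
    zDc r (fun z => ∑ s : ι, c s * ∏ j, z j ^ e s j)
      = fun z => ∑ s : ι, (c s * (e s r : ℂ)) * ∏ j, z j ^ e s j := by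
  funext z
  unfold zDc
  have hder : HasDerivAt (fun t => ∑ s : ι, c s * ∏ j, (Function.update z r t j) ^ e s j)
      (∑ s : ι, c s * ((e s r : ℂ) * (z r) ^ (e s r - 1) * ∏ j ∈ univ.erase r, z j ^ e s j))
      (z r) := by
    apply HasDerivAt.fun_sum
    intro s _
    have h1 : (fun t => c s * ∏ j, (Function.update z r t j) ^ e s j)
        = fun t => c s * (t ^ e s r * ∏ j ∈ univ.erase r, z j ^ e s j) := by
      funext t; rw [prod_update_pow]
    rw [h1]
    have h2 := ((hasDerivAt_pow (e s r) (z r)).mul_const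
      (∏ j ∈ univ.erase r, z j ^ e s j)).const_mul (c s)
    convert h2 using 1
    try ring
  rw [hder.deriv, Finset.mul_sum]
  refine Finset.sum_congr rfl fun s _ => ?_
  rw [← Finset.mul_prod_erase univ (fun j => z j ^ e s j) (Finset.mem_univ r)]
  rcases Nat.eq_zero_or_pos (e s r) with h | h
  · simp [h]
  · obtain ⟨k, hk⟩ := Nat.exists_eq_succ_of_ne_zero h.ne'
    rw [hk]
    simp only [Nat.succ_sub_one, pow_succ]
    push_cast
    ring

lemma nat_sum_sq (n : ℕ) :
    6 * ∑ i ∈ range n, i ^ 2 = (n - 1) * n * (2 * n - 1) := by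
  induction n with
  | zero => simp
  | succ m ih =>
    rw [Finset.sum_range_succ, Nat.mul_add, ih]
    cases m with
    | zero => simp
    | succ k =>
      simp only [Nat.succ_sub_one]
      have h1 : 2 * (k + 1 + 1) - 1 = 2 * k + 3 := by omega
      have h2 : 2 * (k + 1) - 1 = 2 * k + 1 := by omega
      rw [h1, h2]
      ring

lemma prod_pairs_eq {n : ℕ} (f : Fin n × Fin n → ℂ) :
    ∏ p ∈ Finset.univ.filter (fun p : Fin n × Fin n => p.1 < p.2), f p
      = ∏ i : Fin n, ∏ j ∈ Ioi i, f (i, j) := by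
  refine Eq.trans ?_ (Finset.prod_sigma univ Ioi (fun x => f (x.1, x.2)))
  refine Finset.prod_nbij' (fun p => ⟨p.1, p.2⟩) (fun x => (x.1, x.2)) ?_ ?_ ?_ ?_ ?_
  · intro p hp
    simp only [Finset.mem_filter, Finset.mem_univ, true_and] at hp
    simp [Finset.mem_sigma, Finset.mem_Ioi, hp]
  · intro x hx
    simp only [Finset.mem_sigma, Finset.mem_univ, Finset.mem_Ioi, true_and] at hx
    simp [hx]
  · intro p _; rfl
  · intro x _; rfl
  · intro p _; rfl

/-- `∑_i (z_i ∂_{z_i})² W = ((n-1)n(2n-1)/6) W`. -/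
theorem vandermonde_euler_eq (n : ℕ) (z : Fin n → ℂ) :
    ∑ i : Fin n, zDc i (zDc i (vandermondeW n)) z
      = (((n - 1) * n * (2 * n - 1) : ℕ) : ℂ) / 6 * vandermondeW n z := by
  classical
  -- coefficients of the monomial expansion of W
  set c : Equiv.Perm (Fin n) → ℂ :=
    fun σ => (-1) ^ (∑ i : Fin n, (Ioi i).card) * ((Equiv.Perm.sign σ : ℤ) : ℂ) with hc
  have hW : vandermondeW n = fun w : Fin n → ℂ =>
      ∑ σ : Equiv.Perm (Fin n), c σ * ∏ j, w j ^ (σ j : ℕ) := by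
    funext w
    unfold vandermondeW
    rw [prod_pairs_eq (fun p => w p.1 - w p.2)]
    have step2 : ∏ i : Fin n, ∏ j ∈ Ioi i, (w i - w j)
        = (-1 : ℂ) ^ (∑ i : Fin n, (Ioi i).card)
            * ∏ i : Fin n, ∏ j ∈ Ioi i, (w j - w i) := by
      rw [← Finset.prod_pow_eq_pow_sum, ← Finset.prod_mul_distrib]
      refine Finset.prod_congr rfl fun i _ => ?_
      rw [← Finset.prod_const, ← Finset.prod_mul_distrib]
      refine Finset.prod_congr rfl fun j _ => ?_
      ring
    rw [step2, ← Matrix.det_vandermonde w, ← Matrix.det_transpose,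
      Matrix.det_apply, Finset.mul_sum]
    refine Finset.sum_congr rfl fun σ _ => ?_
    simp only [Matrix.transpose_apply, Matrix.vandermonde_apply, hc]
    rw [Units.smul_def, zsmul_eq_mul]
    push_cast
    ring
  rw [hW]
  have h1 : ∀ i : Fin n,
      zDc i (zDc i (fun w => ∑ σ : Equiv.Perm (Fin n), c σ * ∏ j, w j ^ (σ j : ℕ)))
        = fun w => ∑ σ : Equiv.Perm (Fin n),
            ((c σ * ((σ i : ℕ) : ℂ)) * ((σ i : ℕ) : ℂ)) * ∏ j, w j ^ (σ j : ℕ) := by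
    intro i
    rw [zDc_sum c (fun σ j => (σ j : ℕ)) i,
      zDc_sum (fun σ : Equiv.Perm (Fin n) => c σ * ((σ i : ℕ) : ℂ)) (fun σ j => (σ j : ℕ)) i]
  simp only [h1]
  rw [Finset.sum_comm, Finset.mul_sum]
  refine Finset.sum_congr rfl fun σ _ => ?_
  rw [← Finset.sum_mul]
  have hre : ∑ i : Fin n, ((σ i : ℕ) : ℂ) ^ 2 = ∑ i : Fin n, ((i : ℕ) : ℂ) ^ 2 :=
    Equiv.sum_comp σ (fun j => ((j : ℕ) : ℂ) ^ 2)
  have h6 : (((n - 1) * n * (2 * n - 1) : ℕ) : ℂ) = 6 * ∑ i : Fin n, ((i : ℕ) : ℂ) ^ 2 := by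
    have := nat_sum_sq n
    have hcast : ((∑ i ∈ range n, i ^ 2 : ℕ) : ℂ) = ∑ i : Fin n, ((i : ℕ) : ℂ) ^ 2 := by
      push_cast
      rw [Fin.sum_univ_eq_sum_range (fun k => (k : ℂ) ^ 2) n]
    calc (((n - 1) * n * (2 * n - 1) : ℕ) : ℂ)
        = ((6 * ∑ i ∈ range n, i ^ 2 : ℕ) : ℂ) := by rw [this]
      _ = 6 * ∑ i : Fin n, ((i : ℕ) : ℂ) ^ 2 := by push_cast [← hcast]; ring
  have hL : ∑ i : Fin n, (c σ * ((σ i : ℕ) : ℂ) * ((σ i : ℕ) : ℂ))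
      = c σ * ∑ i : Fin n, ((i : ℕ) : ℂ) ^ 2 := by
    rw [← hre, Finset.mul_sum]
    exact Finset.sum_congr rfl fun i _ => by ring
  rw [hL, h6]
  have h60 : (6 : ℂ) ≠ 0 := by norm_num
  field_simp
end

section
/- For n ≥ 1 and pairwise distinct nonzero complex z₁,…,zₙ with z_i z_j ≠ 1 for all i ≠ j, the function φ_μ^D = ∏_{1≤i<j≤n}(z_i + z_i⁻¹ - z_j - z_j⁻¹)^μ (for positive real arguments making bases positive) satisfies ∑_{r=1}^n (z_r∂_{z_r})²(φ_μ^D) + 2μ(1-μ)[∑_{i<j} z_iz_j/(z_i-z_j)² + ∑_{i<j} z_iz_j/(z_iz_j-1)²] φ_μ^D = (n(n-1)(2n-1)μ²/6) φ_μ^D. -/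
/-- The operator `z_r ∂_{z_r}` on complex-valued functions of `n` real variables. -/
noncomputable def zDp {n : ℕ} (r : Fin n) (f : (Fin n → ℝ) → ℂ) : (Fin n → ℝ) → ℂ :=
  fun z => (z r : ℂ) * deriv (fun t => f (Function.update z r t)) (z r)

/-- The power of the type D Weyl function:
`φ_μ^D(z) = ∏_{i<j} (z_i + z_i⁻¹ - z_j - z_j⁻¹)^μ`. -/
noncomputable def phiD (n : ℕ) (μ : ℂ) : (Fin n → ℝ) → ℂ :=
  fun z => ∏ p ∈ Finset.univ.filter (fun p : Fin n × Fin n => p.1 < p.2),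
    ((z p.1 + (z p.1)⁻¹ - z p.2 - (z p.2)⁻¹ : ℝ) : ℂ) ^ μ

open Finset

variable {n : ℕ} (μ : ℂ) (z : Fin n → ℝ) (r : Fin n)

variable {n : ℕ} (μ : ℂ) (z : Fin n → ℝ) (r : Fin n)

/-- base function of the moving variable -/
noncomputable def bb (z : Fin n → ℝ) (r : Fin n) (p : Fin n × Fin n) (t : ℝ) : ℝ :=
  (if p.1 = r then t else z p.1) + (if p.1 = r then t else z p.1)⁻¹
    - (if p.2 = r then t else z p.2) - (if p.2 = r then t else z p.2)⁻¹

noncomputable def ee (r : Fin n) (p : Fin n × Fin n) : ℂ :=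
  (if p.1 = r then 1 else 0) - (if p.2 = r then 1 else 0)

noncomputable def PP (n : ℕ) : Finset (Fin n × Fin n) :=
  Finset.univ.filter (fun p : Fin n × Fin n => p.1 < p.2)

noncomputable def Psi (n : ℕ) (μ : ℂ) (z : Fin n → ℝ) (r : Fin n) (t : ℝ) : ℂ :=
  ∏ p ∈ PP n, ((bb z r p t : ℝ) : ℂ) ^ μ

noncomputable def SS (n : ℕ) (z : Fin n → ℝ) (r : Fin n) (t : ℝ) : ℂ :=
  ∑ p ∈ PP n, ee r p / ((bb z r p t : ℝ) : ℂ)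

noncomputable def FF (n : ℕ) (μ : ℂ) (z : Fin n → ℝ) (r : Fin n) (t : ℝ) : ℂ :=
  μ * (1 - (((t:ℂ))^2)⁻¹) * SS n z r t * Psi n μ z r t

lemma hasDerivAt_bb (p : Fin n × Fin n) (hp : p.1 ≠ p.2) {t : ℝ} (ht : t ≠ 0) :
    HasDerivAt (bb z r p) ((if p.1 = r then (1:ℝ) else 0) - (if p.2 = r then 1 else 0)
      + ((if p.1 = r then (1:ℝ) else 0) - (if p.2 = r then 1 else 0)) * (-(t^2)⁻¹)) t := by
  unfold bb
  by_cases h1 : p.1 = r <;> by_cases h2 : p.2 = r <;> simp only [h1, h2, if_pos, if_neg, if_true, if_false]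
  · exact absurd (h1.trans h2.symm) hp
  · simpa using (((hasDerivAt_id t).add (hasDerivAt_inv ht)).sub_const (z p.2)).sub_const (z p.2)⁻¹
  · have : HasDerivAt (fun t : ℝ => z p.1 + (z p.1)⁻¹ - t - t⁻¹)
        (0 - 1 - (-(t^2)⁻¹)) t := by
      exact (((hasDerivAt_const t _).sub (hasDerivAt_id t)).sub (hasDerivAt_inv ht))
    convert this using 1 <;> ring
  · simpa using hasDerivAt_const t _

lemma hasDerivAt_factor (p : Fin n × Fin n) (hp : p.1 ≠ p.2) {t : ℝ} (ht : 0 < t)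
    (hb : 0 < bb z r p t) :
    HasDerivAt (fun t => ((bb z r p t : ℝ) : ℂ) ^ μ)
      (μ * (1 - (((t:ℂ))^2)⁻¹) * (ee r p / ((bb z r p t : ℝ) : ℂ)) * ((bb z r p t : ℝ) : ℂ) ^ μ) t := by
  have hX : ((bb z r p t : ℝ) : ℂ) ≠ 0 := by
    exact_mod_cast hb.ne'
  have hslit : ((bb z r p t : ℝ) : ℂ) ∈ Complex.slitPlane := by
    rw [Complex.ofReal_mem_slitPlane]; exact hb
  have hcast : HasDerivAt (fun t => ((bb z r p t : ℝ) : ℂ))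
      (((if p.1 = r then (1:ℝ) else 0) - (if p.2 = r then 1 else 0)
        + ((if p.1 = r then (1:ℝ) else 0) - (if p.2 = r then 1 else 0)) * (-(t^2)⁻¹) : ℝ) : ℂ) t :=
    (hasDerivAt_bb z r p hp ht.ne').ofReal_comp
  have hcpow := (Complex.hasStrictDerivAt_cpow_const (c := μ) hslit).hasDerivAt
  have hcomp := hcpow.scomp t hcast
  refine hcomp.congr_deriv ?_
  symm
  rw [Complex.cpow_sub _ _ hX, Complex.cpow_one]
  have hee : ((((if p.1 = r then (1:ℝ) else 0) - (if p.2 = r then 1 else 0)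
        + ((if p.1 = r then (1:ℝ) else 0) - (if p.2 = r then 1 else 0)) * (-(t^2)⁻¹) : ℝ)) : ℂ)
      = ee r p * (1 - (((t:ℂ))^2)⁻¹) := by
    unfold ee
    by_cases h1 : p.1 = r <;> by_cases h2 : p.2 = r <;>
      simp only [h1, h2, if_true, if_false, ite_true, ite_false] <;> push_cast <;> ring
  rw [smul_eq_mul, hee]
  field_simp

lemma hasDerivAt_Psi {t : ℝ} (ht : 0 < t) (hb : ∀ p ∈ PP n, 0 < bb z r p t) :
    HasDerivAt (Psi n μ z r) (FF n μ z r t) t := by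
  have h := HasDerivAt.fun_finsetProd (u := PP n)
    (f := fun p t => ((bb z r p t : ℝ) : ℂ) ^ μ)
    (f' := fun p => μ * (1 - (((t:ℂ))^2)⁻¹) * (ee r p / ((bb z r p t : ℝ) : ℂ)) * ((bb z r p t : ℝ) : ℂ) ^ μ)
    (fun p hp => hasDerivAt_factor μ z r p (Finset.mem_filter.1 hp).2.ne ht (hb p hp))
  refine h.congr_deriv ?_
  symm
  unfold FF SS Psi
  rw [Finset.mul_sum, Finset.sum_mul]
  refine Finset.sum_congr rfl (fun p hp => ?_)
  rw [smul_eq_mul]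
  have : (∏ j ∈ (PP n).erase p, ((bb z r j t : ℝ) : ℂ) ^ μ) * ((bb z r p t : ℝ) : ℂ) ^ μ
      = ∏ j ∈ PP n, ((bb z r j t : ℝ) : ℂ) ^ μ := Finset.prod_erase_mul _ _ hp
  rw [← this]
  ring

noncomputable def QQ (n : ℕ) (z : Fin n → ℝ) (r : Fin n) (t : ℝ) : ℂ :=
  ∑ p ∈ PP n, (ee r p)^2 / ((bb z r p t : ℝ) : ℂ)^2

lemma ee_cast (p : Fin n × Fin n) (t : ℝ) :
    ((((if p.1 = r then (1:ℝ) else 0) - (if p.2 = r then 1 else 0)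
        + ((if p.1 = r then (1:ℝ) else 0) - (if p.2 = r then 1 else 0)) * (-(t^2)⁻¹) : ℝ)) : ℂ)
      = ee r p * (1 - (((t:ℂ))^2)⁻¹) := by
  unfold ee
  by_cases h1 : p.1 = r <;> by_cases h2 : p.2 = r <;>
    simp only [h1, h2, if_true, if_false, ite_true, ite_false] <;> push_cast <;> ring

lemma hasDerivAt_SS {t : ℝ} (ht : 0 < t) (hb : ∀ p ∈ PP n, 0 < bb z r p t) :
    HasDerivAt (SS n z r) (-((1 - (((t:ℂ))^2)⁻¹)) * QQ n z r t) t := by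
  unfold SS QQ
  rw [neg_mul, Finset.mul_sum, ← Finset.sum_neg_distrib]
  apply HasDerivAt.fun_sum
  intro p hp
  have hX : ((bb z r p t : ℝ) : ℂ) ≠ 0 := by exact_mod_cast (hb p hp).ne'
  have hcast : HasDerivAt (fun t => ((bb z r p t : ℝ) : ℂ))
      (((if p.1 = r then (1:ℝ) else 0) - (if p.2 = r then 1 else 0)
        + ((if p.1 = r then (1:ℝ) else 0) - (if p.2 = r then 1 else 0)) * (-(t^2)⁻¹) : ℝ) : ℂ) t :=
    (hasDerivAt_bb z r p (Finset.mem_filter.1 hp).2.ne ht.ne').ofReal_comp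
  have hinv := (hasDerivAt_inv hX).scomp t hcast
  have h := hinv.const_mul (ee r p)
  rw [show (fun y => ee r p * ((fun w : ℂ => w⁻¹) ∘ fun s : ℝ => ((bb z r p s : ℝ) : ℂ)) y)
      = (fun y => ee r p / ((bb z r p y : ℝ) : ℂ)) from
    funext (fun y => by simp [Function.comp, div_eq_mul_inv])] at h
  refine h.congr_deriv ?_
  symm
  rw [ee_cast]
  field_simp
  have hh : ((bb z r p t : ℝ) : ℂ) ^ 2 * (((bb z r p t : ℝ) : ℂ))⁻¹ ^ 2 = 1 := by
    rw [← mul_pow, mul_inv_cancel₀ hX, one_pow]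
  linear_combination (-((((t:ℂ))⁻¹ ^ 2 * ee r p ^ 2 - ee r p ^ 2))) * hh

lemma hasDerivAt_ofReal (t : ℝ) : HasDerivAt (fun s : ℝ => ((s : ℝ) : ℂ)) 1 t := by
  have h : HasDerivAt (fun s : ℝ => s) (1:ℝ) t := hasDerivAt_id t
  have := h.ofReal_comp
  simpa using this

lemma hasDerivAt_one_sub_inv {t : ℝ} (ht : t ≠ 0) :
    HasDerivAt (fun s : ℝ => (1 - (((s:ℂ))^2)⁻¹)) (2 * ((t:ℂ))⁻¹^3) t := by
  have h1 : HasDerivAt (fun s : ℝ => ((s:ℂ))^2) (2 * (t:ℂ)) t := by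
    have := (hasDerivAt_pow 2 ((t:ℂ))).scomp t (hasDerivAt_ofReal t)
    simp [Function.comp] at this
    exact this
  have ht' : ((t:ℂ))^2 ≠ 0 := by
    simp [Complex.ofReal_ne_zero.2 ht]
  have h2 := (hasDerivAt_inv ht').scomp t h1
  have h2' : HasDerivAt (fun s : ℝ => (((s:ℂ))^2)⁻¹) (-(2 * (t:ℂ) * (((t:ℂ)^2)^2)⁻¹)) t := by
    simp [Function.comp] at h2
    exact h2
  have h3 := (hasDerivAt_const t (1:ℂ)).sub h2'
  refine h3.congr_deriv ?_
  symm
  have htc : ((t:ℂ)) ≠ 0 := Complex.ofReal_ne_zero.2 ht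
  field_simp
  ring

lemma hasDerivAt_FF {t : ℝ} (ht : 0 < t) (hb : ∀ p ∈ PP n, 0 < bb z r p t) :
    HasDerivAt (FF n μ z r)
      (μ * (2 * ((t:ℂ))⁻¹^3) * SS n z r t * Psi n μ z r t
        + μ * (1 - (((t:ℂ))^2)⁻¹) * (-((1 - (((t:ℂ))^2)⁻¹)) * QQ n z r t) * Psi n μ z r t
        + μ * (1 - (((t:ℂ))^2)⁻¹) * SS n z r t * FF n μ z r t) t := by
  have h1 := ((hasDerivAt_one_sub_inv ht.ne').const_mul μ).fun_mul (hasDerivAt_SS z r ht hb)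
  have h2 := h1.fun_mul (hasDerivAt_Psi μ z r ht hb)
  refine h2.congr_deriv ?_
  symm
  ring

lemma psi_eq : (fun t => phiD n μ (Function.update z r t)) = Psi n μ z r := by
  funext t
  unfold phiD Psi bb PP
  simp [Function.update_apply]

lemma bb_self (p : Fin n × Fin n) :
    bb z r p (z r) = z p.1 + (z p.1)⁻¹ - z p.2 - (z p.2)⁻¹ := by
  unfold bb
  split_ifs with h1 h2 h2 <;> first
    | rfl
    | (rw [h1] <;> try rw [h2])
    | rw [h2]

lemma eventual_pos (hzr : 0 < z r) (hb : ∀ p ∈ PP n, 0 < bb z r p (z r)) :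
    ∀ᶠ t in nhds (z r), 0 < t ∧ ∀ p ∈ PP n, 0 < bb z r p t := by
  have h1 : ∀ᶠ t in nhds (z r), 0 < t := lt_mem_nhds hzr
  have h2 : ∀ᶠ t in nhds (z r), ∀ p ∈ PP n, 0 < bb z r p t := by
    rw [Filter.eventually_all]
    intro p
    by_cases hp : p ∈ PP n
    · exact (((hasDerivAt_bb z r p (Finset.mem_filter.1 hp).2.ne hzr.ne').continuousAt).eventually
        (lt_mem_nhds (hb p hp))).mono (fun x hx _ => hx)
    · exact Filter.Eventually.of_forall (fun x h => absurd h hp)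
  exact h1.and h2

lemma zDp_phiD_update (t : ℝ) :
    zDp r (phiD n μ) (Function.update z r t) = (t : ℂ) * deriv (Psi n μ z r) t := by
  unfold zDp
  rw [Function.update_self]
  congr 1
  rw [← psi_eq]
  congr 1
  funext s
  rw [Function.update_idem]

lemma zDp_sq (hzr : 0 < z r) (hb : ∀ p ∈ PP n, 0 < bb z r p (z r)) :
    zDp r (zDp r (phiD n μ)) z
      = (z r : ℂ) * (FF n μ z r (z r)
        + (z r : ℂ) * (μ * (2 * (((z r : ℝ):ℂ))⁻¹^3) * SS n z r (z r) * Psi n μ z r (z r)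
          + μ * (1 - ((((z r : ℝ):ℂ))^2)⁻¹) * (-((1 - ((((z r : ℝ):ℂ))^2)⁻¹)) * QQ n z r (z r)) * Psi n μ z r (z r)
          + μ * (1 - ((((z r : ℝ):ℂ))^2)⁻¹) * SS n z r (z r) * FF n μ z r (z r))) := by
  have hev := eventual_pos z r hzr hb
  have heq : (fun t => zDp r (phiD n μ) (Function.update z r t))
      =ᶠ[nhds (z r)] (fun t => (t : ℂ) * FF n μ z r t) := by
    refine hev.mono (fun t ht => ?_)
    show zDp r (phiD n μ) (Function.update z r t) = (t : ℂ) * FF n μ z r t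
    rw [zDp_phiD_update, (hasDerivAt_Psi μ z r ht.1 ht.2).deriv]
  have hF := (hasDerivAt_ofReal (z r)).fun_mul (hasDerivAt_FF μ z r hzr hb)
  rw [show zDp r (zDp r (phiD n μ)) z
      = (z r : ℂ) * deriv (fun t => zDp r (phiD n μ) (Function.update z r t)) (z r) from rfl,
    heq.deriv_eq, hF.deriv]
  ring

/-! ### Algebraic part -/

noncomputable def cC (z : Fin n → ℝ) (i : Fin n) : ℂ := ((z i : ℝ) : ℂ) + (((z i : ℝ) : ℂ))⁻¹
noncomputable def aA (z : Fin n → ℝ) (i : Fin n) : ℂ := ((z i : ℝ) : ℂ) - (((z i : ℝ) : ℂ))⁻¹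
noncomputable def ssf (z : Fin n → ℝ) (i j : Fin n) : ℂ := if j = i then 0 else (cC z i - cC z j)⁻¹

lemma sum_ite_ne (f : Fin n → ℂ) (j : Fin n) :
    ∑ k, (if j = k then 0 else f k) = (∑ k, f k) - f j := by
  have h1 : ∑ k, (if j = k then f k else 0) = f j := by
    rw [Finset.sum_ite_eq]; simp
  have h2 : ∀ k, (if j = k then 0 else f k) = f k - (if j = k then f k else 0) := by
    intro k; by_cases h : j = k <;> simp [h]
  simp only [h2]
  rw [Finset.sum_sub_distrib, h1]

lemma swap_double (v : Fin n → Fin n → ℂ) :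
    ∑ i : Fin n, ∑ j : Fin n, v j i = ∑ i : Fin n, ∑ j : Fin n, v i j :=
  Finset.sum_comm

lemma rot_triple (W : Fin n → Fin n → Fin n → ℂ) :
    ∑ r : Fin n, ∑ j : Fin n, ∑ k : Fin n, W j k r
      = ∑ r : Fin n, ∑ j : Fin n, ∑ k : Fin n, W r j k := by
  rw [Finset.sum_comm]
  exact Finset.sum_congr rfl fun j _ => Finset.sum_comm

/-- `S` in collapsed form. -/
lemma S_form (z : Fin n → ℝ) (r : Fin n) :
    SS n z r (z r) = ∑ j, ssf z r j := by
  unfold SS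
  have hb : ∀ p : Fin n × Fin n, ((bb z r p (z r) : ℝ) : ℂ) = cC z p.1 - cC z p.2 := by
    intro p; rw [bb_self]; unfold cC; push_cast; ring
  simp only [hb]
  unfold PP
  rw [Finset.sum_filter, Fintype.sum_prod_type]
  have step : ∀ i j : Fin n, (if i < j then ee r (i, j) / (cC z i - cC z j) else 0)
      = (if i = r then (if i < j then (cC z i - cC z j)⁻¹ else 0) else 0)
        - (if j = r then (if i < j then (cC z i - cC z j)⁻¹ else 0) else 0) := by
    intro i j
    unfold ee
    by_cases h1 : i = r <;> by_cases h2 : j = r <;> by_cases h3 : i < j <;>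
      simp [h1, h2, h3, div_eq_mul_inv]
    all_goals split_ifs <;> ring
  simp only [step]
  simp only [Finset.sum_sub_distrib]
  have c1 : ∑ i : Fin n, ∑ j : Fin n,
      (if i = r then (if i < j then (cC z i - cC z j)⁻¹ else 0) else 0)
      = ∑ j, (if r < j then (cC z r - cC z j)⁻¹ else 0) := by
    rw [Finset.sum_comm]
    refine Finset.sum_congr rfl fun j _ => ?_
    rw [Finset.sum_ite_eq']
    simp
  have c2 : ∑ i : Fin n, ∑ j : Fin n,
      (if j = r then (if i < j then (cC z i - cC z j)⁻¹ else 0) else 0)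
      = ∑ i, (if i < r then (cC z i - cC z r)⁻¹ else 0) := by
    refine Finset.sum_congr rfl fun i _ => ?_
    rw [Finset.sum_ite_eq']
    simp
  rw [c1, c2, ← Finset.sum_sub_distrib]
  refine Finset.sum_congr rfl fun j _ => ?_
  unfold ssf
  rcases lt_trichotomy j r with h | h | h
  · rw [if_neg (not_lt_of_gt h), if_pos h, if_neg h.ne, zero_sub, ← inv_neg, neg_sub]
  · simp [h]
  · rw [if_pos h, if_neg (not_lt_of_gt h), if_neg h.ne', sub_zero]

lemma Q_form (z : Fin n → ℝ) (r : Fin n) :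
    QQ n z r (z r) = ∑ j, (ssf z r j)^2 := by
  unfold QQ
  have hb : ∀ p : Fin n × Fin n, ((bb z r p (z r) : ℝ) : ℂ) = cC z p.1 - cC z p.2 := by
    intro p; rw [bb_self]; unfold cC; push_cast; ring
  simp only [hb]
  unfold PP
  rw [Finset.sum_filter, Fintype.sum_prod_type]
  have step : ∀ i j : Fin n, (if i < j then (ee r (i, j))^2 / (cC z i - cC z j)^2 else 0)
      = (if i = r then (if i < j then ((cC z i - cC z j)^2)⁻¹ else 0) else 0)
        + (if j = r then (if i < j then ((cC z i - cC z j)^2)⁻¹ else 0) else 0) := by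
    intro i j
    by_cases h3 : i < j
    · have hij : i ≠ j := h3.ne
      unfold ee
      by_cases h1 : i = r <;> by_cases h2 : j = r
      · exact absurd (h1.trans h2.symm) hij
      all_goals simp [h1, h2, h3, div_eq_mul_inv]
      all_goals split_ifs <;> ring
    · simp [h3]
  simp only [step]
  simp only [Finset.sum_add_distrib]
  have c1 : ∑ i : Fin n, ∑ j : Fin n,
      (if i = r then (if i < j then ((cC z i - cC z j)^2)⁻¹ else 0) else 0)
      = ∑ j, (if r < j then ((cC z r - cC z j)^2)⁻¹ else 0) := by
    rw [Finset.sum_comm]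
    refine Finset.sum_congr rfl fun j _ => ?_
    rw [Finset.sum_ite_eq']
    simp
  have c2 : ∑ i : Fin n, ∑ j : Fin n,
      (if j = r then (if i < j then ((cC z i - cC z j)^2)⁻¹ else 0) else 0)
      = ∑ i, (if i < r then ((cC z i - cC z r)^2)⁻¹ else 0) := by
    refine Finset.sum_congr rfl fun i _ => ?_
    rw [Finset.sum_ite_eq']
    simp
  rw [c1, c2, ← Finset.sum_add_distrib]
  refine Finset.sum_congr rfl fun j _ => ?_
  unfold ssf
  rcases lt_trichotomy j r with h | h | h
  · rw [if_neg (not_lt_of_gt h), if_pos h, if_neg h.ne, zero_add, inv_pow,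
      show cC z j - cC z r = -(cC z r - cC z j) by ring]
    ring
  · simp [h]
  · rw [if_pos h, if_neg (not_lt_of_gt h), if_neg h.ne', add_zero, inv_pow]

section algebra
variable (hpos : ∀ r, 0 < z r)
    (hdist : ∀ i j : Fin n, i ≠ j → z i ≠ z j)
    (hone : ∀ i j : Fin n, i ≠ j → z i * z j ≠ 1)

include hpos in
lemma hXne (i : Fin n) : ((z i : ℝ) : ℂ) ≠ 0 := Complex.ofReal_ne_zero.2 (hpos i).ne'

include hpos hdist hone in
lemma hccne (i j : Fin n) (hij : i ≠ j) : cC z i - cC z j ≠ 0 := by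
  have hkey : (cC z i - cC z j) * (((z i : ℝ) : ℂ) * ((z j : ℝ) : ℂ))
      = (((z i : ℝ) : ℂ) - ((z j : ℝ) : ℂ)) * (((z i : ℝ) : ℂ) * ((z j : ℝ) : ℂ) - 1) := by
    unfold cC
    have hi := hXne z hpos i
    have hj := hXne z hpos j
    field_simp
    ring
  have h1 : ((z i : ℝ) : ℂ) - ((z j : ℝ) : ℂ) ≠ 0 := by
    rw [sub_ne_zero]
    exact_mod_cast hdist i j hij
  have h2 : ((z i : ℝ) : ℂ) * ((z j : ℝ) : ℂ) - 1 ≠ 0 := by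
    rw [sub_ne_zero]
    intro h
    exact hone i j hij (by exact_mod_cast h)
  intro h
  rw [h, zero_mul] at hkey
  exact (mul_ne_zero h1 h2) hkey.symm

include hpos hdist hone in
lemma L1 : 2 * ∑ r, cC z r * (∑ j, ssf z r j) = (n:ℂ) * ((n:ℂ) - 1) := by
  have hin : ∀ r, cC z r * ∑ j, ssf z r j = ∑ j, cC z r * ssf z r j :=
    fun r => Finset.mul_sum _ _ _
  simp only [hin]
  have hswap := swap_double (fun r j => cC z r * ssf z r j)
  have : 2 * ∑ r : Fin n, ∑ j : Fin n, cC z r * ssf z r j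
      = ∑ r : Fin n, ∑ j : Fin n, (cC z r * ssf z r j + cC z j * ssf z j r) := by
    simp only [Finset.sum_add_distrib]
    rw [← hswap]; ring
  rw [this]
  have hpt : ∀ r j : Fin n, cC z r * ssf z r j + cC z j * ssf z j r
      = if r = j then 0 else 1 := by
    intro r j
    by_cases h : r = j
    · simp [h, ssf]
    · rw [if_neg h]
      unfold ssf
      rw [if_neg (Ne.symm h), if_neg h]
      have h1 := hccne z hpos hdist hone r j h
      have h2 := hccne z hpos hdist hone j r (Ne.symm h)
      field_simp
      ring
  simp only [hpt]
  have hrow : ∀ r : Fin n, ∑ j : Fin n, (if r = j then (0:ℂ) else 1) = (n:ℂ) - 1 := by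
    intro r
    rw [sum_ite_ne (fun _ => (1:ℂ)) r]
    simp [Finset.card_univ]
  simp only [hrow]
  simp [Finset.card_univ]
  ring
end algebra

noncomputable def uC (z : Fin n → ℝ) (i j : Fin n) : ℂ :=
  ((z i : ℝ):ℂ) * ((z j : ℝ):ℂ) / ((((z i : ℝ):ℂ) - ((z j : ℝ):ℂ))^2)
    + ((z i : ℝ):ℂ) * ((z j : ℝ):ℂ) / ((((z i : ℝ):ℂ) * ((z j : ℝ):ℂ) - 1)^2)

section algebra2
variable (hpos : ∀ r, 0 < z r)
    (hdist : ∀ i j : Fin n, i ≠ j → z i ≠ z j)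
    (hone : ∀ i j : Fin n, i ≠ j → z i * z j ≠ 1)

include hpos hdist hone in
lemma L2 : 2 * ∑ r, aA z r^2 * (∑ j, (ssf z r j)^2)
    = 2 * (∑ r : Fin n, ∑ j : Fin n, if r = j then 0 else uC z r j)
      + (n:ℂ) * ((n:ℂ) - 1) := by
  have hin : ∀ r, aA z r^2 * ∑ j, (ssf z r j)^2 = ∑ j, aA z r^2 * (ssf z r j)^2 :=
    fun r => Finset.mul_sum _ _ _
  simp only [hin]
  have hswap := swap_double (fun r j => aA z r^2 * (ssf z r j)^2)
  have h2 : 2 * ∑ r : Fin n, ∑ j : Fin n, aA z r^2 * (ssf z r j)^2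
      = ∑ r : Fin n, ∑ j : Fin n, (aA z r^2 * (ssf z r j)^2 + aA z j^2 * (ssf z j r)^2) := by
    simp only [Finset.sum_add_distrib]
    rw [← hswap]; ring
  rw [h2]
  have hpt : ∀ r j : Fin n, aA z r^2 * (ssf z r j)^2 + aA z j^2 * (ssf z j r)^2
      = (if r = j then 0 else 2 * uC z r j) + (if r = j then 0 else 1) := by
    intro r j
    by_cases h : r = j
    · simp [h, ssf]
    · rw [if_neg h, if_neg h]
      unfold ssf
      rw [if_neg (Ne.symm h), if_neg h]
      have h1 := hccne z hpos hdist hone r j h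
      have h2' := hccne z hpos hdist hone j r (Ne.symm h)
      have hi := hXne z hpos r
      have hj := hXne z hpos j
      have hd : ((z r : ℝ):ℂ) - ((z j : ℝ):ℂ) ≠ 0 := by
        rw [sub_ne_zero]; exact_mod_cast hdist r j h
      have ho : ((z r : ℝ):ℂ) * ((z j : ℝ):ℂ) - 1 ≠ 0 := by
        rw [sub_ne_zero]; intro hh; exact hone r j h (by exact_mod_cast hh)
      have hfact : cC z r - cC z j
          = (((z r:ℝ):ℂ) - ((z j:ℝ):ℂ)) * (((z r:ℝ):ℂ) * ((z j:ℝ):ℂ) - 1)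
            / (((z r:ℝ):ℂ) * ((z j:ℝ):ℂ)) := by
        rw [eq_div_iff (mul_ne_zero hi hj)]
        unfold cC
        field_simp
        ring
      have hfact2 : cC z j - cC z r = -(cC z r - cC z j) := by ring
      have har : aA z r = (((z r:ℝ):ℂ)^2 - 1) / ((z r:ℝ):ℂ) := by
        unfold aA; rw [eq_div_iff hi]; field_simp
      have haj : aA z j = (((z j:ℝ):ℂ)^2 - 1) / ((z j:ℝ):ℂ) := by
        unfold aA; rw [eq_div_iff hj]; field_simp
      rw [hfact2, hfact, har, haj]
      unfold uC
      field_simp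
      ring
  simp only [hpt]
  simp only [Finset.sum_add_distrib]
  have hrow : ∀ r : Fin n, ∑ j : Fin n, (if r = j then (0:ℂ) else 1) = (n:ℂ) - 1 := by
    intro r
    rw [sum_ite_ne (fun _ => (1:ℂ)) r]
    simp [Finset.card_univ]
  have hmul : ∀ r j : Fin n, (if r = j then (0:ℂ) else 2 * uC z r j)
      = 2 * (if r = j then 0 else uC z r j) := by
    intro r j; split_ifs <;> ring
  simp only [hmul, hrow, ← Finset.mul_sum]
  simp [Finset.card_univ]
  ring
end algebra2

lemma bridge (z : Fin n → ℝ) :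
    (∑ r : Fin n, ∑ j : Fin n, if r = j then 0 else uC z r j)
      = 2 * ∑ p ∈ PP n, uC z p.1 p.2 := by
  have husym : ∀ i j : Fin n, uC z i j = uC z j i := by
    intro i j; unfold uC; ring
  have hpt : ∀ i j : Fin n, (if i = j then (0:ℂ) else uC z i j)
      = (if i < j then uC z i j else 0) + (if j < i then uC z j i else 0) := by
    intro i j
    rcases lt_trichotomy i j with h | h | h
    · rw [if_neg h.ne, if_pos h, if_neg (not_lt_of_gt h), add_zero, husym]
    · simp [h, lt_irrefl]
    · rw [if_neg (Ne.symm h.ne), if_neg (not_lt_of_gt h), if_pos h, zero_add, husym]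
  simp only [hpt]
  simp only [Finset.sum_add_distrib]
  rw [swap_double (fun i j => if i < j then uC z i j else 0)]
  have hPP : ∑ p ∈ PP n, uC z p.1 p.2
      = ∑ i : Fin n, ∑ j : Fin n, (if i < j then uC z i j else 0) := by
    unfold PP; rw [Finset.sum_filter, Fintype.sum_prod_type]
  rw [hPP]
  ring

noncomputable def WW (z : Fin n → ℝ) (r j k : Fin n) : ℂ :=
  if j = k then 0 else aA z r^2 * ssf z r j * ssf z r k

section algebra3
variable (hpos : ∀ r, 0 < z r)
    (hdist : ∀ i j : Fin n, i ≠ j → z i ≠ z j)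
    (hone : ∀ i j : Fin n, i ≠ j → z i * z j ≠ 1)

lemma sq_expand (z : Fin n → ℝ) (r : Fin n) :
    aA z r^2 * ((∑ j, ssf z r j)^2 - ∑ j, (ssf z r j)^2)
      = ∑ j : Fin n, ∑ k : Fin n, WW z r j k := by
  have hsq : (∑ j, ssf z r j)^2 = ∑ j : Fin n, ∑ k : Fin n, ssf z r j * ssf z r k := by
    rw [pow_two, Finset.sum_mul_sum]
  have hrow : ∀ j : Fin n, ∑ k : Fin n, (if j = k then 0 else ssf z r j * ssf z r k)
      = (∑ k, ssf z r j * ssf z r k) - (ssf z r j)^2 := by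
    intro j
    rw [sum_ite_ne (fun k => ssf z r j * ssf z r k) j, pow_two]
  have key : ∑ j : Fin n, ∑ k : Fin n, (if j = k then 0 else ssf z r j * ssf z r k)
      = (∑ j, ssf z r j)^2 - ∑ j, (ssf z r j)^2 := by
    simp only [hrow]
    rw [Finset.sum_sub_distrib, hsq]
  rw [← key, Finset.mul_sum]
  refine Finset.sum_congr rfl fun j _ => ?_
  rw [Finset.mul_sum]
  refine Finset.sum_congr rfl fun k _ => ?_
  unfold WW
  split_ifs <;> ring

lemma lagrange (a b c : ℂ) (hab : a - b ≠ 0) (hac : a - c ≠ 0) (hbc : b - c ≠ 0) :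
    (a^2-4) * (a-b)⁻¹ * (a-c)⁻¹ + (b^2-4) * (b-c)⁻¹ * (b-a)⁻¹
      + (c^2-4) * (c-a)⁻¹ * (c-b)⁻¹ = 1 := by
  have hba : b - a ≠ 0 := fun h => hab (by linear_combination -h)
  have hca : c - a ≠ 0 := fun h => hac (by linear_combination -h)
  have hcb : c - b ≠ 0 := fun h => hbc (by linear_combination -h)
  field_simp
  ring

include hpos in
lemma aA_sq (i : Fin n) : aA z i ^ 2 = cC z i ^ 2 - 4 := by
  unfold aA cC
  have := hXne z hpos i
  field_simp
  ring

include hpos hdist hone in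
lemma WW_triple (r j k : Fin n) :
    WW z r j k + WW z j k r + WW z k r j
      = if r = j then 0 else if j = k then 0 else if r = k then 0 else 1 := by
  by_cases h1 : r = j
  · subst h1; simp [WW, ssf]
  by_cases h2 : j = k
  · subst h2; simp [WW, ssf, Ne.symm h1]
  by_cases h3 : r = k
  · subst h3; simp [WW, ssf, h1, Ne.symm h2]
  rw [if_neg h1, if_neg h2, if_neg h3]
  unfold WW ssf
  simp only [if_neg h1, if_neg h2, if_neg h3,
    if_neg (show ¬(j = r) from fun hh => h1 hh.symm),
    if_neg (show ¬(k = r) from fun hh => h3 hh.symm),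
    if_neg (show ¬(k = j) from fun hh => h2 hh.symm)]
  rw [aA_sq z hpos r, aA_sq z hpos j, aA_sq z hpos k]
  exact lagrange _ _ _ (hccne z hpos hdist hone r j h1)
    (hccne z hpos hdist hone r k h3) (hccne z hpos hdist hone j k h2)
end algebra3

section algebra4
variable (hpos : ∀ r, 0 < z r)
    (hdist : ∀ i j : Fin n, i ≠ j → z i ≠ z j)
    (hone : ∀ i j : Fin n, i ≠ j → z i * z j ≠ 1)

include hpos hdist hone in
lemma L3 : 3 * ∑ r, aA z r^2 * ((∑ j, ssf z r j)^2 - ∑ j, (ssf z r j)^2)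
    = (n:ℂ) * ((n:ℂ)-1) * ((n:ℂ)-2) := by
  simp only [sq_expand]
  have rot1 := rot_triple (WW z)
  have rot2 : ∑ r : Fin n, ∑ j : Fin n, ∑ k : Fin n, WW z k r j
      = ∑ r : Fin n, ∑ j : Fin n, ∑ k : Fin n, WW z r j k :=
    (rot_triple (fun a b c => WW z b c a)).trans rot1
  have h3T : 3 * (∑ r : Fin n, ∑ j : Fin n, ∑ k : Fin n, WW z r j k)
      = ∑ r : Fin n, ∑ j : Fin n, ∑ k : Fin n, (WW z r j k + WW z j k r + WW z k r j) := by
    simp only [Finset.sum_add_distrib]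
    rw [rot1, rot2]
    ring
  rw [h3T]
  simp only [WW_triple z hpos hdist hone]
  have hk : ∀ r j : Fin n, ∑ k : Fin n,
      (if r = j then (0:ℂ) else if j = k then 0 else if r = k then 0 else 1)
      = if r = j then 0 else (n:ℂ) - 2 := by
    intro r j
    by_cases h : r = j
    · simp [h]
    · simp only [if_neg h]
      rw [sum_ite_ne (fun k => if r = k then (0:ℂ) else 1) j,
        sum_ite_ne (fun _ => (1:ℂ)) r, if_neg h]
      simp [Finset.card_univ]
      ring
  simp only [hk]
  have hj : ∀ r : Fin n, ∑ j : Fin n, (if r = j then (0:ℂ) else (n:ℂ)-2)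
      = ((n:ℂ)-1) * ((n:ℂ)-2) := by
    intro r
    rw [sum_ite_ne (fun _ => (n:ℂ)-2) r]
    simp [Finset.card_univ]
    ring
  simp only [hj]
  simp [Finset.card_univ]
  ring
end algebra4

lemma scalar_id (X S Q φ μ : ℂ) (hX : X ≠ 0) :
    X * (μ * (1 - (X^2)⁻¹) * S * φ
      + X * (μ * (2 * X⁻¹^3) * S * φ
        + μ * (1 - (X^2)⁻¹) * (-(1 - (X^2)⁻¹) * Q) * φ
        + μ * (1 - (X^2)⁻¹) * S * (μ * (1 - (X^2)⁻¹) * S * φ)))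
    = (μ * (X + X⁻¹) * S + (μ^2 * S^2 - μ * Q) * (X - X⁻¹)^2) * φ := by
  have h11 : X^11 * X⁻¹^11 = 1 := by
    rw [← mul_pow, mul_inv_cancel₀ hX, one_pow]
  field_simp
  ring

lemma zDp_sq_simplified (hzr : 0 < z r) (hb : ∀ p ∈ PP n, 0 < bb z r p (z r)) :
    zDp r (zDp r (phiD n μ)) z
      = (μ * cC z r * (∑ j, ssf z r j)
          + (μ^2 * (∑ j, ssf z r j)^2 - μ * (∑ j, (ssf z r j)^2)) * aA z r^2)
        * phiD n μ z := by
  rw [zDp_sq μ z r hzr hb]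
  have hPsi : Psi n μ z r (z r) = phiD n μ z := by
    rw [← psi_eq]
    show phiD n μ (Function.update z r (z r)) = phiD n μ z
    rw [Function.update_eq_self]
  unfold FF
  rw [hPsi, S_form, Q_form]
  have hX : ((z r : ℝ) : ℂ) ≠ 0 := Complex.ofReal_ne_zero.2 hzr.ne'
  rw [scalar_id ((z r : ℝ) : ℂ) (∑ j, ssf z r j) (∑ j, (ssf z r j)^2) (phiD n μ z) μ hX]
  unfold cC aA
  ring

/-- `φ_μ^D` satisfies the Olshanesky–Perelomov equation of type D:
`∑_r (z_r∂_{z_r})² φ + 2μ(1-μ)[∑_{i<j} z_iz_j/(z_i-z_j)² + z_iz_j/(z_iz_j-1)²] φ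
  = (n(n-1)(2n-1)μ²/6) φ`. -/
theorem phiD_olshanesky_perelomov (n : ℕ) (hn : 1 ≤ n) (μ : ℂ) (z : Fin n → ℝ)
    (hpos : ∀ r, 0 < z r)
    (hdist : ∀ i j : Fin n, i ≠ j → z i ≠ z j)
    (hone : ∀ i j : Fin n, i ≠ j → z i * z j ≠ 1)
    (hbase : ∀ i j : Fin n, i < j → 0 < z i + (z i)⁻¹ - z j - (z j)⁻¹) :
    ∑ r : Fin n, zDp r (zDp r (phiD n μ)) z
      + 2 * μ * (1 - μ) *
        ((∑ p ∈ Finset.univ.filter (fun p : Fin n × Fin n => p.1 < p.2),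
            (z p.1 * z p.2 / (z p.1 - z p.2) ^ 2
              + z p.1 * z p.2 / (z p.1 * z p.2 - 1) ^ 2) : ℝ) : ℂ)
        * phiD n μ z
    = ((n * (n - 1) * (2 * n - 1) : ℕ) : ℂ) * μ ^ 2 / 6 * phiD n μ z := by
  have hbP : ∀ r : Fin n, ∀ p ∈ PP n, 0 < bb z r p (z r) := by
    intro r p hp
    rw [bb_self]
    exact hbase p.1 p.2 (Finset.mem_filter.1 hp).2
  have hsum : ∑ r : Fin n, zDp r (zDp r (phiD n μ)) z
      = (∑ r : Fin n, (μ * cC z r * (∑ j, ssf z r j)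
          + (μ^2 * (∑ j, ssf z r j)^2 - μ * (∑ j, (ssf z r j)^2)) * aA z r^2)) * phiD n μ z := by
    rw [Finset.sum_mul]
    exact Finset.sum_congr rfl fun r _ => zDp_sq_simplified μ z r (hpos r) (hbP r)
  have hT : ((∑ p ∈ Finset.univ.filter (fun p : Fin n × Fin n => p.1 < p.2),
      (z p.1 * z p.2 / (z p.1 - z p.2) ^ 2 + z p.1 * z p.2 / (z p.1 * z p.2 - 1) ^ 2) : ℝ) : ℂ)
      = ∑ p ∈ PP n, uC z p.1 p.2 := by
    unfold PP uC
    push_cast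
    rfl
  rw [hsum, hT]
  have hsplit : ∀ r : Fin n, μ * cC z r * (∑ j, ssf z r j)
        + (μ^2 * (∑ j, ssf z r j)^2 - μ * (∑ j, (ssf z r j)^2)) * aA z r^2
      = μ * (cC z r * (∑ j, ssf z r j))
        + μ^2 * (aA z r^2 * ((∑ j, ssf z r j)^2 - ∑ j, (ssf z r j)^2))
        + (μ^2 - μ) * (aA z r^2 * (∑ j, (ssf z r j)^2)) := fun r => by ring
  simp only [hsplit]
  rw [Finset.sum_add_distrib, Finset.sum_add_distrib, ← Finset.mul_sum, ← Finset.mul_sum,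
    ← Finset.mul_sum]
  have hL1 := L1 z hpos hdist hone
  have hL2 := L2 z hpos hdist hone
  have hL3 := L3 z hpos hdist hone
  have hbr := bridge z
  have hK : ((n * (n - 1) * (2 * n - 1) : ℕ) : ℂ) = (n:ℂ) * ((n:ℂ)-1) * (2*(n:ℂ)-1) := by
    obtain ⟨m, rfl⟩ : ∃ m, n = m + 1 := ⟨n - 1, by omega⟩
    have e1 : (m + 1) - 1 = m := by omega
    have e2 : 2 * (m + 1) - 1 = 2 * m + 1 := by omega
    rw [e1, e2]
    push_cast
    ring
  rw [hK]
  linear_combination (μ/2 * phiD n μ z) * hL1 + ((μ^2-μ)/2 * phiD n μ z) * hL2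
    + (μ^2/3 * phiD n μ z) * hL3 + ((μ^2-μ) * phiD n μ z) * hbr
end

section
/- For μ ∈ ℂ and z₁,…,zₙ reals > 1, the function ψ_μ^B = ∏_{r=1}^n (z_r^{1/2} - z_r^{-1/2})^μ satisfies ∑_{r=1}^n (z_r∂_{z_r})²(ψ_μ^B) = [nμ²/4 + μ(μ-1) ∑_{r=1}^n z_r/(z_r - 1)²] ψ_μ^B. -/
open Complex Filter

/-- `ψ_μ^B(z) = ∏_r (z_r^{1/2} - z_r^{-1/2})^μ`. -/
noncomputable def psiB (n : ℕ) (μ : ℂ) : (Fin n → ℝ) → ℂ :=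
  fun z => ∏ r : Fin n, ((Real.sqrt (z r) - (Real.sqrt (z r))⁻¹ : ℝ) : ℂ) ^ μ

noncomputable def gg (μ : ℂ) : ℝ → ℂ :=
  fun t => ((Real.sqrt t - (Real.sqrt t)⁻¹ : ℝ) : ℂ) ^ μ

lemma gg_hasDerivAt (μ : ℂ) {t : ℝ} (ht : 1 < t) :
    HasDerivAt (gg μ) (μ * (((t+1)/(2*t*(t-1)) : ℝ) : ℂ) * gg μ t) t := by
  have ht0 : (0:ℝ) < t := by linarith
  have hs1 : 1 < Real.sqrt t := by
    rw [show (1:ℝ) = Real.sqrt 1 by simp]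
    exact Real.sqrt_lt_sqrt (by norm_num) ht
  have hs0 : (0:ℝ) < Real.sqrt t := by linarith
  have hupos : 0 < Real.sqrt t - (Real.sqrt t)⁻¹ := by
    have : (Real.sqrt t)⁻¹ < 1 := by
      rw [inv_lt_one_iff₀]; right; exact hs1
    linarith
  have hu : HasDerivAt (fun x => Real.sqrt x - (Real.sqrt x)⁻¹)
      (1/(2*Real.sqrt t) - (-(1/(2*Real.sqrt t)) / (Real.sqrt t)^2)) t :=
    (Real.hasDerivAt_sqrt ht0.ne').sub ((Real.hasDerivAt_sqrt ht0.ne').inv hs0.ne')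
  have hu2 := hu.ofReal_comp
  have hD := (Complex.hasStrictDerivAt_cpow_const (c := μ)
    (by simpa using ofReal_mem_slitPlane.2 hupos)).hasDerivAt.comp t hu2
  refine hD.congr_deriv ?_
  have hst : Real.sqrt t * Real.sqrt t = t := Real.mul_self_sqrt ht0.le
  have hkey : ((t+1)/(2*t*(t-1)) : ℝ) * (Real.sqrt t - (Real.sqrt t)⁻¹)
      = 1/(2*Real.sqrt t) - (-(1/(2*Real.sqrt t)) / (Real.sqrt t)^2) := by
    have ht1 : t - 1 ≠ 0 := by linarith
    field_simp
    rw [Real.sq_sqrt ht0.le]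
    ring
  have hne : ((Real.sqrt t - (Real.sqrt t)⁻¹ : ℝ) : ℂ) ≠ 0 :=
    ofReal_ne_zero.2 hupos.ne'
  have hpow : ((Real.sqrt t - (Real.sqrt t)⁻¹ : ℝ) : ℂ) ^ μ
      = ((Real.sqrt t - (Real.sqrt t)⁻¹ : ℝ) : ℂ) ^ (μ - 1)
        * ((Real.sqrt t - (Real.sqrt t)⁻¹ : ℝ) : ℂ) := by
    rw [Complex.cpow_sub _ _ hne, Complex.cpow_one, div_mul_cancel₀ _ hne]
  rw [gg, hpow, ← hkey]
  push_cast
  ring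

lemma zDp_sq_s14 (n : ℕ) (μ : ℂ) (z : Fin n → ℝ) (hz : ∀ r, 1 < z r) (r : Fin n) :
    zDp r (zDp r (psiB n μ)) z
      = (μ ^ 2 / 4 + μ * (μ - 1) * ((z r / (z r - 1) ^ 2 : ℝ) : ℂ)) * psiB n μ z := by
  classical
  set C : ℂ := ∏ s ∈ Finset.univ.erase r, gg μ (z s) with hC
  have hfact : ∀ x : ℝ, psiB n μ (Function.update z r x) = gg μ x * C := by
    intro x
    have h1 : (fun s => gg μ (Function.update z r x s))
        = Function.update (fun s => gg μ (z s)) r (gg μ x) := by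
      funext s
      by_cases hs : s = r
      · subst hs; simp
      · simp [Function.update_of_ne hs]
    calc psiB n μ (Function.update z r x)
        = ∏ s : Fin n, gg μ (Function.update z r x s) := rfl
      _ = ∏ s : Fin n, Function.update (fun s => gg μ (z s)) r (gg μ x) s := by rw [h1]
      _ = gg μ x * C := by
          rw [Finset.prod_update_of_mem (Finset.mem_univ r), hC, Finset.erase_eq]
  have hinner : ∀ x : ℝ, 1 < x →
      zDp r (psiB n μ) (Function.update z r x)
        = C * (μ * (((x+1)/(2*(x-1)) : ℝ) : ℂ) * gg μ x) := by
    intro x hx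
    have hx0 : x ≠ 0 := by positivity
    have hupd : Function.update z r x r = x := Function.update_self r x z
    show (Function.update z r x r : ℂ) *
        deriv (fun t => psiB n μ (Function.update (Function.update z r x) r t))
          (Function.update z r x r) = _
    rw [hupd]
    have h2 : (fun t => psiB n μ (Function.update (Function.update z r x) r t))
        = fun t => gg μ t * C := by
      funext t; rw [Function.update_idem, hfact]
    rw [h2, ((gg_hasDerivAt μ hx).mul_const C).deriv]
    have hx1 : x - 1 ≠ 0 := by linarith
    have h3 : ((x+1)/(2*x*(x-1)) : ℝ) * x = ((x+1)/(2*(x-1)) : ℝ) := by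
      field_simp
    rw [← h3]
    push_cast
    ring
  have ht := hz r
  have hne1 : z r - 1 ≠ 0 := by linarith
  have hev : (fun t => zDp r (psiB n μ) (Function.update z r t))
      =ᶠ[nhds (z r)] fun t => C * (μ * (((t+1)/(2*(t-1)) : ℝ) : ℂ) * gg μ t) := by
    filter_upwards [eventually_gt_nhds ht] with t htt
    rw [hinner t htt]
  have hP : HasDerivAt (fun t : ℝ => (t+1)/(2*(t-1))) (-1/(z r - 1)^2) (z r) := by
    have h1 : HasDerivAt (fun t : ℝ => t + 1) 1 (z r) := (hasDerivAt_id (z r)).add_const 1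
    have h2 : HasDerivAt (fun t : ℝ => 2*(t-1)) (2*1) (z r) :=
      ((hasDerivAt_id (z r)).sub_const 1).const_mul 2
    rw [mul_one] at h2
    have h2ne : 2*(z r - 1) ≠ 0 := mul_ne_zero two_ne_zero hne1
    have := h1.div h2 h2ne
    refine this.congr_deriv ?_
    rw [div_eq_div_iff (pow_ne_zero 2 h2ne) (pow_ne_zero 2 hne1)]
    ring
  have hφ := ((hP.ofReal_comp.const_mul μ).mul (gg_hasDerivAt μ ht)).const_mul C
  have hderiv : deriv (fun t => zDp r (psiB n μ) (Function.update z r t)) (z r)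
      = C * (μ * ((-1/(z r - 1)^2 : ℝ) : ℂ) * gg μ (z r)
          + μ * (((z r + 1)/(2*(z r - 1)) : ℝ) : ℂ)
            * (μ * (((z r + 1)/(2*(z r)*(z r - 1)) : ℝ) : ℂ) * gg μ (z r))) := by
    rw [hev.deriv_eq]
    exact hφ.deriv
  have hpsi : psiB n μ z = gg μ (z r) * C := by
    have := hfact (z r)
    rwa [Function.update_eq_self] at this
  show (z r : ℂ) * deriv (fun t => zDp r (psiB n μ) (Function.update z r t)) (z r) = _
  rw [hderiv, hpsi]
  have htne : ((z r : ℝ) : ℂ) ≠ 0 := by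
    exact_mod_cast (show (z r : ℝ) ≠ 0 by positivity)
  have hne1c : ((z r : ℝ) : ℂ) - 1 ≠ 0 := by
    rw [sub_ne_zero]
    exact_mod_cast ht.ne'
  have key : ((z r : ℝ) : ℂ) * (μ * ((-1/(z r - 1)^2 : ℝ) : ℂ)
        + μ * (((z r + 1)/(2*(z r - 1)) : ℝ) : ℂ)
          * (μ * (((z r + 1)/(2*(z r)*(z r - 1)) : ℝ) : ℂ)))
      = μ ^ 2 / 4 + μ * (μ - 1) * ((z r / (z r - 1) ^ 2 : ℝ) : ℂ) := by
    have hz0 : z r ≠ 0 := by positivity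
    have ha : (-1/(z r - 1)^2 : ℝ) * z r = -(z r/(z r - 1)^2) := by ring
    have hb : ((z r + 1)/(2*(z r - 1)) : ℝ) * ((z r + 1)/(2*(z r)*(z r - 1))) * z r
        = 1/4 + z r/(z r - 1)^2 := by
      field_simp
      ring
    calc ((z r : ℝ) : ℂ) * (μ * ((-1/(z r - 1)^2 : ℝ) : ℂ)
          + μ * (((z r + 1)/(2*(z r - 1)) : ℝ) : ℂ)
            * (μ * (((z r + 1)/(2*(z r)*(z r - 1)) : ℝ) : ℂ)))
        = μ * (((-1/(z r - 1)^2 : ℝ) * z r : ℝ) : ℂ)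
          + μ ^ 2 * ((((z r + 1)/(2*(z r - 1)) : ℝ)
              * ((z r + 1)/(2*(z r)*(z r - 1))) * z r : ℝ) : ℂ) := by
          push_cast; ring
      _ = _ := by rw [ha, hb]; push_cast; ring
  linear_combination (gg μ (z r) * C) * key

/-- `∑_r (z_r∂_{z_r})² ψ_μ^B = [nμ²/4 + μ(μ-1) ∑_r z_r/(z_r-1)²] ψ_μ^B` for `z_r > 1`. -/
theorem psiB_eq (n : ℕ) (μ : ℂ) (z : Fin n → ℝ) (hz : ∀ r, 1 < z r) :
    ∑ r : Fin n, zDp r (zDp r (psiB n μ)) z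
      = ((n : ℂ) * μ ^ 2 / 4
          + μ * (μ - 1) * ((∑ r : Fin n, z r / (z r - 1) ^ 2 : ℝ) : ℂ))
        * psiB n μ z := by
  rw [Finset.sum_congr rfl fun r _ => zDp_sq_s14 n μ z hz r, ← Finset.sum_mul]
  congr 1
  rw [Finset.sum_add_distrib, Finset.sum_const, Finset.card_univ, Fintype.card_fin,
    ← Finset.mul_sum, Complex.ofReal_sum]
  push_cast
  ring
end

section
/- Let n ≥ 1 and let L be the n×n lower unitriangular matrix with entries L_{i,j} = z_{i,j} for i > j, 1 on the diagonal, 0 above. Define path polynomials P_{[k₁,k₂]} = ∑_{(m₀,…,m_r) path from k₁ to k₂} (-1)^r z_{m₁,m₀} z_{m₂,m₁} ⋯ z_{m_r,m_{r-1}}, where a path is a strictly increasing sequence k₁ = m₀ < m₁ < ⋯ < m_r = k₂, and P_{[k,k]} = 1. Then the inverse matrix L⁻¹ is lower unitriangular with (i,j)-entry P_{[j,i]} for i > j. -/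
/-- The product `z_{m₁,m₀} z_{m₂,m₁} ⋯ z_{m_r,m_{r-1}}` along a path `l = [m₀,m₁,…,m_r]`. -/
def chainProd {R : Type*} [CommRing R] (z : ℕ → ℕ → R) (l : List ℕ) : R :=
  (List.zipWith (fun a b => z b a) l l.tail).prod

/-- The path polynomial `P_{[j,i]} = ∑_{paths j=m₀<m₁<⋯<m_r=i} (-1)^r z_{m₁,m₀}⋯z_{m_r,m_{r-1}}`,
with `P_{[k,k]} = 1`.  A path from `j` to `i` is determined by its set `S ⊆ (j,i)` of
intermediate points; the associated path is the sorted list `j :: S ++ [i]`, which has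
`S.card + 1` steps. -/
def pathPoly {R : Type*} [CommRing R] (z : ℕ → ℕ → R) (j i : ℕ) : R :=
  if j = i then 1
  else ∑ S ∈ (Finset.Ioo j i).powerset,
    (-1 : R) ^ (S.card + 1) * chainProd z (j :: (S.sort (· ≤ ·) ++ [i]))

section helpers
variable {R : Type*} [CommRing R] (z : ℕ → ℕ → R)

lemma chainProd_cons_cons (a b : ℕ) (l : List ℕ) :
    chainProd z (a :: b :: l) = z b a * chainProd z (b :: l) := rfl

lemma chainProd_append_pair (l : List ℕ) (a b : ℕ) :
    chainProd z (l ++ [a, b]) = chainProd z (l ++ [a]) * z b a := by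
  induction l with
  | nil => simp [chainProd]
  | cons c t ih =>
    cases t with
    | nil => simp [chainProd]
    | cons d t' =>
      simp only [List.cons_append] at *
      rw [chainProd_cons_cons, chainProd_cons_cons, ih]
      ring

lemma sort_insert_max (S : Finset ℕ) (k : ℕ) (h : ∀ x ∈ S, x < k) :
    (insert k S).sort (· ≤ ·) = S.sort (· ≤ ·) ++ [k] := by
  have hk : k ∉ S := fun hkS => lt_irrefl k (h k hkS)
  have hperm : List.Perm ((insert k S).sort (· ≤ ·)) (S.sort (· ≤ ·) ++ [k]) :=
    ((Finset.sort_perm_toList _ _).trans ((Finset.toList_insert hk).trans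
      (List.Perm.cons _ (Finset.sort_perm_toList _ _).symm))).trans
      (List.perm_append_singleton _ _).symm
  have hsorted : List.Pairwise (· ≤ ·) (S.sort (· ≤ ·) ++ [k]) := by
    refine List.pairwise_append.mpr ⟨Finset.pairwise_sort _ _, List.pairwise_singleton _ _, ?_⟩
    intro x hx y hy
    rw [List.mem_singleton] at hy
    subst hy
    exact le_of_lt (h x ((Finset.mem_sort (α := ℕ) (· ≤ ·)).mp hx))
  exact List.Perm.eq_of_pairwise (fun a b _ _ h1 h2 => le_antisymm h1 h2) (Finset.pairwise_sort _ _) hsorted hperm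

lemma max'_insert_of_lt (S : Finset ℕ) (k : ℕ) (h : ∀ x ∈ S, x < k) (hne) :
    (insert k S).max' hne = k := by
  apply le_antisymm
  · apply Finset.max'_le
    intro y hy
    rcases Finset.mem_insert.mp hy with rfl | hy
    · exact le_refl _
    · exact le_of_lt (h _ hy)
  · exact Finset.le_max' _ _ (Finset.mem_insert_self _ _)

lemma pathPoly_self (j : ℕ) : pathPoly z j j = 1 := by simp [pathPoly]

lemma pathPoly_rec {j i : ℕ} (h : j < i) :
    pathPoly z j i = -∑ k ∈ Finset.Ico j i, z i k * pathPoly z j k := by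
  have hIoo : ∀ k ∈ Finset.Ioo j i, z i k * pathPoly z j k
      = ∑ S' ∈ (Finset.Ioo j k).powerset,
          z i k * ((-1:R)^(S'.card+1) * chainProd z (j :: (S'.sort (· ≤ ·) ++ [k]))) := by
    intro k hk
    rw [Finset.mem_Ioo] at hk
    rw [pathPoly, if_neg hk.1.ne, Finset.mul_sum]
  rw [← Finset.Ioo_insert_left h, Finset.sum_insert Finset.left_notMem_Ioo, pathPoly_self,
    mul_one, Finset.sum_congr rfl hIoo, Finset.sum_sigma']
  rw [pathPoly, if_neg h.ne]
  rw [← Finset.add_sum_erase _ _ (Finset.empty_mem_powerset (Finset.Ioo j i))]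
  have hempty : (-1:R)^(Finset.card (∅:Finset ℕ)+1)
      * chainProd z (j :: ((∅:Finset ℕ).sort (· ≤ ·) ++ [i])) = -(z i j) := by
    simp [chainProd]
  rw [hempty, neg_add]
  congr 1
  rw [← Finset.sum_neg_distrib]
  refine Finset.sum_bij'
    (fun S hS => (⟨S.max' (Finset.nonempty_iff_ne_empty.mpr (Finset.mem_erase.mp hS).1),
        S.erase (S.max' (Finset.nonempty_iff_ne_empty.mpr (Finset.mem_erase.mp hS).1))⟩
      : Σ _ : ℕ, Finset ℕ))
    (fun p _ => insert p.1 p.2) ?_ ?_ ?_ ?_ ?_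
  · -- hi
    intro S hS
    obtain ⟨hne0, hsub⟩ := Finset.mem_erase.mp hS
    rw [Finset.mem_powerset] at hsub
    have hne : S.Nonempty := Finset.nonempty_iff_ne_empty.mpr hne0
    have hkS : S.max' hne ∈ S := S.max'_mem hne
    rw [Finset.mem_sigma]
    constructor
    · exact hsub hkS
    · rw [Finset.mem_powerset]
      intro x hx
      have hxS := Finset.mem_of_mem_erase hx
      rw [Finset.mem_Ioo]
      exact ⟨(Finset.mem_Ioo.mp (hsub hxS)).1,
        lt_of_le_of_ne (S.le_max' x hxS) (Finset.ne_of_mem_erase hx)⟩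
  · -- hj
    intro p hp
    rw [Finset.mem_sigma] at hp
    rw [Finset.mem_erase, Finset.mem_powerset]
    refine ⟨Finset.insert_ne_empty _ _, ?_⟩
    rw [Finset.insert_subset_iff]
    exact ⟨hp.1, (Finset.mem_powerset.mp hp.2).trans
      (Finset.Ioo_subset_Ioo_right (le_of_lt (Finset.mem_Ioo.mp hp.1).2))⟩
  · -- left_inv
    intro S hS
    exact Finset.insert_erase (S.max'_mem
      (Finset.nonempty_iff_ne_empty.mpr (Finset.mem_erase.mp hS).1))
  · -- right_inv
    intro p hp
    rcases p with ⟨k, S'⟩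
    rw [Finset.mem_sigma] at hp
    have hlt : ∀ x ∈ S', x < k := fun x hx =>
      (Finset.mem_Ioo.mp (Finset.mem_powerset.mp hp.2 hx)).2
    have hk : k ∉ S' := fun h' => lt_irrefl k (hlt k h')
    have h1 := max'_insert_of_lt S' k hlt (Finset.insert_nonempty _ _)
    simp only [h1, Finset.erase_insert hk]
  · -- term equality
    intro S hS
    obtain ⟨hne0, hsub⟩ := Finset.mem_erase.mp hS
    rw [Finset.mem_powerset] at hsub
    have hne : S.Nonempty := Finset.nonempty_iff_ne_empty.mpr hne0
    have hkS : S.max' hne ∈ S := S.max'_mem hne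
    set k := S.max' hne with hkdef
    have hlt : ∀ x ∈ S.erase k, x < k := fun x hx =>
      lt_of_le_of_ne (S.le_max' x (Finset.mem_of_mem_erase hx)) (Finset.ne_of_mem_erase hx)
    have hsort : S.sort (· ≤ ·) = (S.erase k).sort (· ≤ ·) ++ [k] := by
      conv_lhs => rw [← Finset.insert_erase hkS]
      exact sort_insert_max _ _ hlt
    have hcard : (S.erase k).card + 1 = S.card := Finset.card_erase_add_one hkS
    have hchain : chainProd z (j :: (((S.erase k).sort (· ≤ ·) ++ [k]) ++ [i]))
        = chainProd z (j :: ((S.erase k).sort (· ≤ ·) ++ [k])) * z i k := by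
      have e1 : (j :: (((S.erase k).sort (· ≤ ·) ++ [k]) ++ [i]))
          = (j :: (S.erase k).sort (· ≤ ·)) ++ [k, i] := by simp
      have e2 : (j :: ((S.erase k).sort (· ≤ ·) ++ [k]))
          = (j :: (S.erase k).sort (· ≤ ·)) ++ [k] := by simp
      rw [e1, e2, chainProd_append_pair]
    rw [hsort, hchain, ← hcard]
    ring
end helpers

/-- If `L` is lower unitriangular with subdiagonal entries `z_{i,j}`, then its inverse is the
lower unitriangular matrix whose `(i,j)` entry (`i > j`) is the path polynomial `P_{[j,i]}`. -/
theorem unitriangular_inverse_pathPoly {R : Type*} [CommRing R] (n : ℕ) (hn : 1 ≤ n)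
    (z : ℕ → ℕ → R) (L M : Matrix (Fin n) (Fin n) R)
    (hL : ∀ i j : Fin n,
      L i j = if (i : ℕ) = j then 1 else if (j : ℕ) < i then z i j else 0)
    (hM : ∀ i j : Fin n,
      M i j = if (i : ℕ) = j then 1 else if (j : ℕ) < i then pathPoly z j i else 0) :
    L * M = 1 ∧ M * L = 1 := by
  have key : L * M = 1 := by
    ext i j
    rw [Matrix.mul_apply, Matrix.one_apply]
    rcases lt_trichotomy (j : ℕ) (i : ℕ) with hji | hij | hij
    · -- j < i : sum is 0
      rw [if_neg (Fin.ne_of_val_ne (by omega))]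
      set f : ℕ → R := fun m =>
        (if (i : ℕ) = m then 1 else if m < (i : ℕ) then z i m else 0) *
        (if m = (j : ℕ) then 1 else if (j : ℕ) < m then pathPoly z j m else 0) with hf
      have hterm : ∀ k : Fin n, L i k * M k j = f (k : ℕ) := by
        intro k
        rw [hL, hM, hf]
      calc ∑ k : Fin n, L i k * M k j = ∑ k : Fin n, f (k : ℕ) := by
            exact Finset.sum_congr rfl fun k _ => hterm k
        _ = ∑ m ∈ Finset.range n, f m := Fin.sum_univ_eq_sum_range f n
        _ = ∑ m ∈ Finset.Icc (j : ℕ) (i : ℕ), f m := by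
            refine (Finset.sum_subset ?_ ?_).symm
            · intro m hm
              rw [Finset.mem_Icc] at hm
              rw [Finset.mem_range]
              omega
            · intro m _ hm
              rw [Finset.mem_Icc] at hm
              rw [hf]
              simp only
              split_ifs <;> first | ring1 | (exfalso; omega)
        _ = f (i : ℕ) + ∑ m ∈ Finset.Ico (j : ℕ) (i : ℕ), f m := by
            rw [← Finset.Ico_insert_right (le_of_lt hji),
              Finset.sum_insert Finset.right_notMem_Ico]
        _ = pathPoly z j i + ∑ m ∈ Finset.Ico (j : ℕ) (i : ℕ), z i m * pathPoly z j m := by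
            congr 1
            · simp [hf, hji, hji.ne']
            · refine Finset.sum_congr rfl ?_
              intro m hm
              rw [Finset.mem_Ico] at hm
              rw [hf]
              simp only
              rw [if_neg (by omega), if_pos hm.2]
              rcases eq_or_lt_of_le hm.1 with heq | hlt
              · rw [if_pos heq.symm, ← heq, pathPoly_self]
              · rw [if_neg (by omega), if_pos hlt]
        _ = 0 := by rw [pathPoly_rec z hji, neg_add_cancel]
    · -- diagonal
      have : i = j := Fin.ext hij.symm
      subst this
      rw [if_pos rfl, Finset.sum_eq_single i]
      · rw [hL, hM]
        simp
      · intro k _ hk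
        have hk' : (k : ℕ) ≠ (i : ℕ) := fun h => hk (Fin.ext h)
        rw [hL, hM]
        split_ifs <;> first | ring1 | (exfalso; omega)
      · intro h
        exact absurd (Finset.mem_univ i) h
    · -- i < j : sum is 0
      rw [if_neg (Fin.ne_of_val_ne (by omega))]
      refine Finset.sum_eq_zero ?_
      intro k _
      rw [hL, hM]
      split_ifs <;> first | ring1 | (exfalso; omega)
  exact ⟨key, mul_eq_one_comm.mp key⟩
end

section
/- For n ≥ 1 and pairwise distinct reals z₁ > z₂ > ⋯ > zₙ > 0 and μ₁, μ₂ ∈ ℝ, the function φ^A = (z₁⋯zₙ)^{μ₁} ∏_{1≤i<j≤n}(z_i - z_j)^{μ₂} satisfies ∑_{r=1}^n (z_r∂_{z_r})²(φ^A) + 2μ₂(1-μ₂)(∑_{1≤i<j≤n} z_iz_j/(z_i-z_j)²) φ^A = [nμ₁² + n(n-1)(μ₁ + μ₂/2)μ₂ + 2 (n choose 3) μ₂²] φ^A. -/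
/-- The operator `z_r ∂_{z_r}` on real-valued functions of `n` real variables. -/
noncomputable def zDr {n : ℕ} (r : Fin n) (f : (Fin n → ℝ) → ℝ) : (Fin n → ℝ) → ℝ :=
  fun z => z r * deriv (fun t => f (Function.update z r t)) (z r)

/-- `φ^A(z) = (z₁⋯zₙ)^{μ₁} ∏_{i<j} (z_i - z_j)^{μ₂}` (real powers). -/
noncomputable def phiA (n : ℕ) (μ₁ μ₂ : ℝ) : (Fin n → ℝ) → ℝ :=
  fun z => (∏ r : Fin n, z r) ^ μ₁ *
    ∏ p ∈ Finset.univ.filter (fun p : Fin n × Fin n => p.1 < p.2),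
      (z p.1 - z p.2) ^ μ₂

section Aux

open Finset

variable {n : ℕ}

lemma sum_erase_to_ite (r : Fin n) (h : Fin n → ℝ) :
    ∑ s ∈ Finset.univ.erase r, h s = ∑ s : Fin n, if s ≠ r then h s else 0 := by
  rw [← Finset.sum_filter]
  congr 1
  ext s
  simp [Finset.mem_erase, ne_comm]

lemma sum_pairs_pivot (r : Fin n) (g : Fin n → ℝ) :
    ∑ p ∈ Finset.univ.filter (fun p : Fin n × Fin n => p.1 < p.2),
      (if p.1 = r then g p.2 else if p.2 = r then g p.1 else 0)
      = ∑ s ∈ Finset.univ.erase r, g s := by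
  rw [Finset.sum_filter, Fintype.sum_prod_type, sum_erase_to_ite]
  have key : ∀ i j : Fin n,
      (if i < j then (if i = r then g j else if j = r then g i else 0) else 0)
        = (if i = r ∧ r < j then g j else 0) + (if j = r ∧ i < r then g i else 0) := by
    intro i j
    by_cases hi : i = r
    · subst hi
      by_cases hij : i < j
      · have h1 : j ≠ i := ne_of_gt hij
        simp [hij, h1, lt_irrefl]
      · simp [hij, lt_irrefl]
    · by_cases hj : j = r
      · subst hj
        by_cases hij : i < j
        · simp [hij, hi]
        · simp [hij, hi]
      · simp [hi, hj]
  simp_rw [key, Finset.sum_add_distrib]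
  rw [Finset.sum_comm (γ := Fin n) (f := fun i j => if i = r ∧ r < j then g j else 0)]
  simp_rw [ite_and]
  simp only [Finset.sum_ite_eq', Finset.mem_univ, if_true]
  rw [← Finset.sum_add_distrib]
  apply Finset.sum_congr rfl
  intro s _
  rcases lt_trichotomy s r with h | h | h
  · simp [h, ne_of_lt h, not_lt_of_gt h]
  · simp [h, lt_irrefl]
  · simp [h, (ne_of_gt h), not_lt_of_gt h]

lemma sum_offdiag_eq_pairs (f : Fin n → Fin n → ℝ) :
    ∑ r : Fin n, ∑ s ∈ Finset.univ.erase r, f r s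
      = ∑ p ∈ Finset.univ.filter (fun p : Fin n × Fin n => p.1 < p.2),
          (f p.1 p.2 + f p.2 p.1) := by
  simp_rw [sum_erase_to_ite]
  have key : ∀ r s : Fin n, (if s ≠ r then f r s else 0)
      = (if r < s then f r s else 0) + (if s < r then f r s else 0) := by
    intro r s
    rcases lt_trichotomy r s with h | h | h
    · simp [h, ne_of_gt h, not_lt_of_gt h]
    · simp [h, lt_irrefl]
    · simp [h, ne_of_lt h, not_lt_of_gt h]
  simp_rw [key, Finset.sum_add_distrib]
  rw [Finset.sum_comm (γ := Fin n) (f := fun r s => if s < r then f r s else 0)]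
  rw [Finset.sum_filter, Fintype.sum_prod_type]
  have dist : ∀ (c : Prop) [Decidable c] (a b : ℝ),
      (if c then a + b else 0) = (if c then a else 0) + (if c then b else 0) := by
    intro c _ a b; split_ifs <;> simp
  simp only [dist, Finset.sum_add_distrib]
  congr 1
  rw [Finset.sum_filter, Fintype.sum_prod_type]

lemma sum_erase2_to_ite (r s : Fin n) (h : Fin n → ℝ) :
    ∑ t ∈ (Finset.univ.erase r).erase s, h t
      = ∑ t : Fin n, if t ≠ r ∧ t ≠ s then h t else 0 := by
  rw [← Finset.sum_filter]
  congr 1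
  ext t
  simp [Finset.mem_erase]
  tauto

lemma tri_to_ite (F : Fin n → Fin n → Fin n → ℝ) :
    ∑ r : Fin n, ∑ s ∈ Finset.univ.erase r, ∑ t ∈ (Finset.univ.erase r).erase s, F r s t
      = ∑ r : Fin n, ∑ s : Fin n, ∑ t : Fin n,
          if s ≠ r ∧ t ≠ r ∧ t ≠ s then F r s t else 0 := by
  simp_rw [sum_erase2_to_ite, sum_erase_to_ite]
  have key : ∀ r s : Fin n,
      (if s ≠ r then (∑ t : Fin n, if t ≠ r ∧ t ≠ s then F r s t else 0) else 0)
        = ∑ t : Fin n, if s ≠ r ∧ t ≠ r ∧ t ≠ s then F r s t else 0 := by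
    intro r s
    split_ifs with h
    · apply Finset.sum_congr rfl
      intro t _
      simp [h]
    · simp [h]
  simp_rw [key]

lemma tri_swap12 (F : Fin n → Fin n → Fin n → ℝ) :
    (∑ r : Fin n, ∑ s : Fin n, ∑ t : Fin n,
        if s ≠ r ∧ t ≠ r ∧ t ≠ s then F r s t else 0)
      = ∑ r : Fin n, ∑ s : Fin n, ∑ t : Fin n,
          if s ≠ r ∧ t ≠ r ∧ t ≠ s then F s r t else 0 := by
  rw [Finset.sum_comm (γ := Fin n)
    (f := fun r s => ∑ t : Fin n, if s ≠ r ∧ t ≠ r ∧ t ≠ s then F s r t else 0)]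
  apply Finset.sum_congr rfl; intro r _
  apply Finset.sum_congr rfl; intro s _
  apply Finset.sum_congr rfl; intro t _
  apply if_congr _ rfl rfl
  constructor <;> rintro ⟨h1, h2, h3⟩ <;> exact ⟨h1.symm, h3, h2⟩

lemma tri_swap13 (F : Fin n → Fin n → Fin n → ℝ) :
    (∑ r : Fin n, ∑ s : Fin n, ∑ t : Fin n,
        if s ≠ r ∧ t ≠ r ∧ t ≠ s then F r s t else 0)
      = ∑ r : Fin n, ∑ s : Fin n, ∑ t : Fin n,
          if s ≠ r ∧ t ≠ r ∧ t ≠ s then F t s r else 0 := by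
  have h0 : ∀ r : Fin n, (∑ s : Fin n, ∑ t : Fin n,
      if s ≠ r ∧ t ≠ r ∧ t ≠ s then F r s t else 0)
      = ∑ t : Fin n, ∑ s : Fin n, if s ≠ r ∧ t ≠ r ∧ t ≠ s then F r s t else 0 := by
    intro r; exact Finset.sum_comm
  have h1 : ∀ r : Fin n, (∑ s : Fin n, ∑ t : Fin n,
      if s ≠ r ∧ t ≠ r ∧ t ≠ s then F t s r else 0)
      = ∑ t : Fin n, ∑ s : Fin n, if s ≠ r ∧ t ≠ r ∧ t ≠ s then F t s r else 0 := by
    intro r; exact Finset.sum_comm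
  simp_rw [h0, h1]
  rw [Finset.sum_comm (γ := Fin n)
    (f := fun r t => ∑ s : Fin n, if s ≠ r ∧ t ≠ r ∧ t ≠ s then F t s r else 0)]
  apply Finset.sum_congr rfl; intro r _
  apply Finset.sum_congr rfl; intro s _
  apply Finset.sum_congr rfl; intro t _
  apply if_congr _ rfl rfl
  constructor <;> rintro ⟨h1, h2, h3⟩ <;> exact ⟨h3.symm, h2.symm, h1.symm⟩ 

lemma six_choose_three (n : ℕ) : 6 * ((n.choose 3 : ℕ) : ℝ) = n * ((n:ℝ) - 1) * ((n:ℝ) - 2) := by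
  match n with
  | 0 => norm_num
  | 1 => norm_num [Nat.choose]
  | 2 => norm_num [Nat.choose]
  | (m+3) =>
    have h1 : (m+3) * (m+2).choose 2 = (m+3).choose 3 * 3 := Nat.add_one_mul_choose_eq (m+2) 2
    have h2 : (m+2) * (m+1).choose 1 = (m+2).choose 2 * 2 := Nat.add_one_mul_choose_eq (m+1) 1
    rw [Nat.choose_one_right] at h2
    have key : 6 * ((m+3).choose 3) = (m+3)*((m+2)*(m+1)) := by
      calc 6 * ((m+3).choose 3) = 2 * ((m+3).choose 3 * 3) := by ring
        _ = 2 * ((m+3) * (m+2).choose 2) := by rw [h1]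
        _ = (m+3) * ((m+2).choose 2 * 2) := by ring
        _ = (m+3) * ((m+2)*(m+1)) := by rw [← h2]
    have := congrArg (fun k : ℕ => (k : ℝ)) key
    push_cast at this ⊢
    linarith [this]

lemma scalar_identity (n : ℕ) (hn : 1 ≤ n) (μ₁ μ₂ : ℝ) (z : Fin n → ℝ)
    (hpos : ∀ r, 0 < z r) (hmono : ∀ i j : Fin n, i < j → z j < z i) :
    ∑ r : Fin n,
        (z r * (μ₁ / z r + μ₂ * ∑ s ∈ Finset.univ.erase r, (z r - z s)⁻¹)
          + (z r * (μ₁ / z r + μ₂ * ∑ s ∈ Finset.univ.erase r, (z r - z s)⁻¹))^2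
          + (z r)^2 * (-(μ₁ * ((z r)^2)⁻¹)
              - μ₂ * ∑ s ∈ Finset.univ.erase r, ((z r - z s)^2)⁻¹))
      + 2 * μ₂ * (1 - μ₂) *
          (∑ p ∈ Finset.univ.filter (fun p : Fin n × Fin n => p.1 < p.2),
            z p.1 * z p.2 / (z p.1 - z p.2) ^ 2)
    = (n : ℝ) * μ₁ ^ 2 + (n : ℝ) * ((n : ℝ) - 1) * (μ₁ + μ₂ / 2) * μ₂
        + 2 * (n.choose 3 : ℝ) * μ₂ ^ 2 := by
  have hne : ∀ i j : Fin n, i ≠ j → z i - z j ≠ 0 := by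
    intro i j h
    rcases h.lt_or_gt with h' | h'
    · exact sub_ne_zero.mpr (ne_of_gt (hmono i j h'))
    · exact sub_ne_zero.mpr (ne_of_lt (hmono j i h'))
  set a : Fin n → Fin n → ℝ := fun i j => z i / (z i - z j) with ha
  set T : Fin n → ℝ := fun r => ∑ s ∈ Finset.univ.erase r, a r s with hT
  set A2 : Fin n → ℝ := fun r => ∑ s ∈ Finset.univ.erase r, (a r s)^2 with hA2
  set SD : ℝ := ∑ p ∈ Finset.univ.filter (fun p : Fin n × Fin n => p.1 < p.2),
      z p.1 * z p.2 / (z p.1 - z p.2) ^ 2 with hSD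
  set N2 : ℝ := ∑ p ∈ Finset.univ.filter (fun p : Fin n × Fin n => p.1 < p.2), (1:ℝ) with hN2
  -- each summand
  have hterm : ∀ r : Fin n,
      z r * (μ₁ / z r + μ₂ * ∑ s ∈ Finset.univ.erase r, (z r - z s)⁻¹)
        + (z r * (μ₁ / z r + μ₂ * ∑ s ∈ Finset.univ.erase r, (z r - z s)⁻¹))^2
        + (z r)^2 * (-(μ₁ * ((z r)^2)⁻¹)
            - μ₂ * ∑ s ∈ Finset.univ.erase r, ((z r - z s)^2)⁻¹)
      = μ₁^2 + (μ₂ + 2*μ₁*μ₂) * T r + μ₂^2 * (T r * T r) - μ₂ * A2 r := by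
    intro r
    have h1 : z r * (μ₁ / z r + μ₂ * ∑ s ∈ Finset.univ.erase r, (z r - z s)⁻¹)
        = μ₁ + μ₂ * T r := by
      have hd : ∀ s ∈ Finset.univ.erase r, z r * (z r - z s)⁻¹ = a r s := by
        intro s hs
        show z r * (z r - z s)⁻¹ = z r / (z r - z s)
        rw [div_eq_mul_inv]
      calc z r * (μ₁ / z r + μ₂ * ∑ s ∈ Finset.univ.erase r, (z r - z s)⁻¹)
          = μ₁ + μ₂ * ∑ s ∈ Finset.univ.erase r, z r * (z r - z s)⁻¹ := by
            rw [mul_add, mul_div_cancel₀ _ (ne_of_gt (hpos r)), mul_left_comm, Finset.mul_sum]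
        _ = μ₁ + μ₂ * T r := by rw [Finset.sum_congr rfl hd]
    have h2 : (z r)^2 * (-(μ₁ * ((z r)^2)⁻¹)
        - μ₂ * ∑ s ∈ Finset.univ.erase r, ((z r - z s)^2)⁻¹)
        = -μ₁ - μ₂ * A2 r := by
      have hzr2 : (z r)^2 ≠ 0 := pow_ne_zero _ (ne_of_gt (hpos r))
      rw [mul_sub, hA2]
      congr 1
      · rw [mul_neg, mul_left_comm, mul_inv_cancel₀ hzr2, mul_one]
      · rw [mul_left_comm, Finset.mul_sum]
        simp only [Finset.mul_sum]
        apply Finset.sum_congr rfl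
        intro s hs
        have hd : z r - z s ≠ 0 := hne r s (Ne.symm (Finset.mem_erase.mp hs).1)
        rw [ha]
        simp only [div_pow]
        rw [div_eq_mul_inv]
    rw [h1, h2]
    ring
  rw [Finset.sum_congr rfl (fun r _ => hterm r)]
  -- split the sum
  have hsplit : ∑ r : Fin n,
      (μ₁^2 + (μ₂ + 2*μ₁*μ₂) * T r + μ₂^2 * (T r * T r) - μ₂ * A2 r)
      = (n:ℝ) * μ₁^2 + (μ₂ + 2*μ₁*μ₂) * (∑ r, T r) + μ₂^2 * (∑ r, T r * T r)
        - μ₂ * (∑ r, A2 r) := by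
    rw [Finset.sum_sub_distrib, Finset.sum_add_distrib, Finset.sum_add_distrib,
      ← Finset.mul_sum, ← Finset.mul_sum, ← Finset.mul_sum, Finset.sum_const,
      Finset.card_univ, Fintype.card_fin, nsmul_eq_mul]
  rw [hsplit]
  -- S1 : ∑ T = N2
  have hS1 : ∑ r, T r = N2 := by
    simp only [hT]
    rw [sum_offdiag_eq_pairs]
    apply Finset.sum_congr rfl
    intro p hp
    have hlt : p.1 < p.2 := (Finset.mem_filter.mp hp).2
    have h12 : z p.1 - z p.2 ≠ 0 := hne _ _ (ne_of_lt hlt)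
    have h21 : z p.2 - z p.1 ≠ 0 := hne _ _ (ne_of_gt hlt)
    rw [ha]
    field_simp
    ring
  -- S2 : ∑ A2 = N2 + 2 * SD
  have hS2 : ∑ r, A2 r = N2 + 2 * SD := by
    simp only [hA2]
    rw [sum_offdiag_eq_pairs, hN2, hSD, Finset.mul_sum, ← Finset.sum_add_distrib]
    apply Finset.sum_congr rfl
    intro p hp
    have hlt : p.1 < p.2 := (Finset.mem_filter.mp hp).2
    have h12 : z p.1 - z p.2 ≠ 0 := hne _ _ (ne_of_lt hlt)
    have h21 : z p.2 - z p.1 ≠ 0 := hne _ _ (ne_of_gt hlt)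
    rw [ha]
    field_simp
    ring
  -- ∑ T*T = ∑ A2 + Q
  set Q : ℝ := ∑ r : Fin n, ∑ s ∈ Finset.univ.erase r,
      ∑ t ∈ (Finset.univ.erase r).erase s, a r s * a r t with hQ
  have hTT : ∑ r, T r * T r = (∑ r, A2 r) + Q := by
    rw [hQ, ← Finset.sum_add_distrib]
    apply Finset.sum_congr rfl
    intro r _
    rw [hT, hA2, Finset.sum_mul_sum, ← Finset.sum_add_distrib]
    apply Finset.sum_congr rfl
    intro s hs
    rw [pow_two]
    exact (Finset.add_sum_erase _ (fun t => a r s * a r t) hs).symm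
  -- 3 Q = n(n-1)(n-2)
  have hQval : 3 * Q = (n:ℝ) * ((n:ℝ)-1) * ((n:ℝ)-2) := by
    have e1 : Q = ∑ r : Fin n, ∑ s : Fin n, ∑ t : Fin n,
        if s ≠ r ∧ t ≠ r ∧ t ≠ s then a r s * a r t else 0 := by
      rw [hQ, tri_to_ite]
    have e2 : Q = ∑ r : Fin n, ∑ s : Fin n, ∑ t : Fin n,
        if s ≠ r ∧ t ≠ r ∧ t ≠ s then a s r * a s t else 0 := by
      rw [e1]; exact tri_swap12 (fun r s t => a r s * a r t)
    have e3 : Q = ∑ r : Fin n, ∑ s : Fin n, ∑ t : Fin n,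
        if s ≠ r ∧ t ≠ r ∧ t ≠ s then a t s * a t r else 0 := by
      rw [e1]; exact tri_swap13 (fun r s t => a r s * a r t)
    have hM3 : (∑ r : Fin n, ∑ s ∈ Finset.univ.erase r,
        ∑ t ∈ (Finset.univ.erase r).erase s, (1:ℝ))
        = (n:ℝ) * ((n:ℝ)-1) * ((n:ℝ)-2) := by
      have inner : ∀ r : Fin n, ∑ s ∈ Finset.univ.erase r,
          ∑ t ∈ (Finset.univ.erase r).erase s, (1:ℝ)
          = ((n:ℝ)-1) * ((n:ℝ)-2) := by
        intro r
        have hcard1 : (Finset.univ.erase r).card = n - 1 := by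
          rw [Finset.card_erase_of_mem (Finset.mem_univ r), Finset.card_univ, Fintype.card_fin]
        have step : ∀ s ∈ Finset.univ.erase r,
            (∑ t ∈ (Finset.univ.erase r).erase s, (1:ℝ)) = (n:ℝ) - 2 := by
          intro s hs
          have h2n : 2 ≤ n := by
            have : 1 < Fintype.card (Fin n) :=
              Fintype.one_lt_card_iff.mpr ⟨s, r, (Finset.mem_erase.mp hs).1⟩
            rwa [Fintype.card_fin] at this
          rw [Finset.sum_const, Finset.card_erase_of_mem hs, hcard1]
          have : ((n - 1 - 1 : ℕ) : ℝ) = (n:ℝ) - 2 := by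
            have : n - 1 - 1 = n - 2 := by omega
            rw [this, Nat.cast_sub h2n]
            norm_num
          rw [nsmul_eq_mul, this, mul_one]
        rw [Finset.sum_congr rfl step, Finset.sum_const, hcard1, nsmul_eq_mul,
          Nat.cast_sub hn]
        norm_num
      rw [Finset.sum_congr rfl (fun r _ => inner r), Finset.sum_const,
        Finset.card_univ, Fintype.card_fin, nsmul_eq_mul]
      ring
    have tripoint : ∀ r s t : Fin n, s ≠ r → t ≠ r → t ≠ s →
        a r s * a r t + a s r * a s t + a t s * a t r = 1 := by
      intro r s t h1 h2 h3
      have d1 : z r - z s ≠ 0 := hne _ _ (Ne.symm h1)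
      have d2 : z r - z t ≠ 0 := hne _ _ (Ne.symm h2)
      have d3 : z s - z r ≠ 0 := hne _ _ h1
      have d4 : z s - z t ≠ 0 := hne _ _ (Ne.symm h3)
      have d5 : z t - z s ≠ 0 := hne _ _ h3
      have d6 : z t - z r ≠ 0 := hne _ _ h2
      rw [ha]
      field_simp
      ring
    have comb : 3 * Q = ∑ r : Fin n, ∑ s : Fin n, ∑ t : Fin n,
        if s ≠ r ∧ t ≠ r ∧ t ≠ s then (1:ℝ) else 0 := by
      calc 3 * Q = Q + Q + Q := by ring
        _ = ∑ r : Fin n, ∑ s : Fin n, ∑ t : Fin n,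
            if s ≠ r ∧ t ≠ r ∧ t ≠ s then (1:ℝ) else 0 := by
          nth_rewrite 1 [e1]
          nth_rewrite 1 [e2]
          rw [e3]
          simp_rw [← Finset.sum_add_distrib]
          apply Finset.sum_congr rfl; intro r _
          apply Finset.sum_congr rfl; intro s _
          apply Finset.sum_congr rfl; intro t _
          by_cases hc : s ≠ r ∧ t ≠ r ∧ t ≠ s
          · obtain ⟨c1, c2, c3⟩ := hc
            simp only [c1, c2, c3, and_self, if_true, ne_eq, not_false_iff]
            exact tripoint r s t c1 c2 c3
          · rw [if_neg hc, if_neg hc, if_neg hc, if_neg hc]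
            norm_num
    rw [comb]
    have h4 := tri_to_ite (n := n) (fun _ _ _ => (1:ℝ))
    rw [← h4, hM3]
  -- N2 value
  have hN2val : 2 * N2 = (n:ℝ) * ((n:ℝ)-1) := by
    have h := sum_offdiag_eq_pairs (n := n) (fun _ _ => (1:ℝ))
    have lhs : ∑ r : Fin n, ∑ s ∈ Finset.univ.erase r, (1:ℝ) = (n:ℝ) * ((n:ℝ)-1) := by
      have step : ∀ r : Fin n, ∑ s ∈ Finset.univ.erase r, (1:ℝ) = (n:ℝ)-1 := by
        intro r
        rw [Finset.sum_const, Finset.card_erase_of_mem (Finset.mem_univ r),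
          Finset.card_univ, Fintype.card_fin, nsmul_eq_mul, Nat.cast_sub hn]
        norm_num
      rw [Finset.sum_congr rfl (fun r _ => step r), Finset.sum_const,
        Finset.card_univ, Fintype.card_fin, nsmul_eq_mul]
    have rhs : (∑ p ∈ Finset.univ.filter (fun p : Fin n × Fin n => p.1 < p.2),
        ((1:ℝ) + 1)) = N2 + N2 := by
      rw [Finset.sum_add_distrib, hN2]
    linarith [h, lhs, rhs]
  have hC3 := six_choose_three n
  rw [hS1, hTT, hS2]
  linear_combination ((2*μ₁*μ₂ + μ₂^2)/2) * hN2val + (μ₂^2/3) * hQval - (μ₂^2/3) * hC3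

lemma phiA_eq_exp (n : ℕ) (μ₁ μ₂ : ℝ) (z : Fin n → ℝ) (hpos : ∀ r, 0 < z r)
    (hmono : ∀ i j : Fin n, i < j → z j < z i) :
    phiA n μ₁ μ₂ z = Real.exp (μ₁ * ∑ s : Fin n, Real.log (z s)
      + μ₂ * ∑ p ∈ Finset.univ.filter (fun p : Fin n × Fin n => p.1 < p.2),
          Real.log (z p.1 - z p.2)) := by
  unfold phiA
  rw [Real.exp_add]
  congr 1
  · rw [Real.rpow_def_of_pos (Finset.prod_pos (fun r _ => hpos r)),
      Real.log_prod (fun x _ => ne_of_gt (hpos x)), mul_comm]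
  · rw [Finset.mul_sum, Real.exp_sum]
    apply Finset.prod_congr rfl
    intro p hp
    have hlt : p.1 < p.2 := (Finset.mem_filter.mp hp).2
    have hb : 0 < z p.1 - z p.2 := sub_pos.mpr (hmono _ _ hlt)
    rw [Real.rpow_def_of_pos hb, mul_comm]

lemma phiA_pos (n : ℕ) (μ₁ μ₂ : ℝ) (z : Fin n → ℝ) (hpos : ∀ r, 0 < z r)
    (hmono : ∀ i j : Fin n, i < j → z j < z i) : 0 < phiA n μ₁ μ₂ z := by
  rw [phiA_eq_exp n μ₁ μ₂ z hpos hmono]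
  exact Real.exp_pos _

lemma eventually_good (n : ℕ) (z : Fin n → ℝ) (hpos : ∀ r, 0 < z r)
    (hmono : ∀ i j : Fin n, i < j → z j < z i) (r : Fin n) :
    ∀ᶠ t in nhds (z r), (∀ i, 0 < Function.update z r t i) ∧
      (∀ i j : Fin n, i < j → Function.update z r t j < Function.update z r t i) := by
  have hevpos : ∀ᶠ t in nhds (z r), ∀ i, 0 < Function.update z r t i := by
    rw [Filter.eventually_all]
    intro i
    by_cases hi : i = r
    · filter_upwards [eventually_gt_nhds (hpos r)] with t ht
      rw [hi, Function.update_self]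
      exact ht
    · filter_upwards with t
      rw [Function.update_of_ne hi]
      exact hpos i
  have hevord : ∀ᶠ t in nhds (z r),
      ∀ i j : Fin n, i < j → Function.update z r t j < Function.update z r t i := by
    rw [Filter.eventually_all]
    intro i
    rw [Filter.eventually_all]
    intro j
    by_cases hij : i < j
    · by_cases hi : i = r
      · have hj : j ≠ r := by rw [← hi]; exact ne_of_gt hij
        filter_upwards [eventually_gt_nhds (show z j < z r by rw [← hi]; exact hmono i j hij)]
          with t ht _
        rw [hi, Function.update_of_ne hj, Function.update_self]
        exact ht
      · by_cases hj : j = r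
        · filter_upwards [eventually_lt_nhds (show z r < z i by rw [← hj]; exact hmono i j hij)]
            with t ht _
          rw [hj, Function.update_of_ne hi, Function.update_self]
          exact ht
        · filter_upwards with t _
          rw [Function.update_of_ne hi, Function.update_of_ne hj]
          exact hmono i j hij
    · filter_upwards with t ht
      exact absurd ht hij
  filter_upwards [hevpos, hevord] with t h1 h2
  exact ⟨h1, h2⟩

lemma hasDerivAt_phiA (n : ℕ) (μ₁ μ₂ : ℝ) (z : Fin n → ℝ) (hpos : ∀ r, 0 < z r)
    (hmono : ∀ i j : Fin n, i < j → z j < z i) (r : Fin n) :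
    HasDerivAt (fun t => phiA n μ₁ μ₂ (Function.update z r t))
      (phiA n μ₁ μ₂ z * (μ₁ / z r + μ₂ * ∑ s ∈ Finset.univ.erase r, (z r - z s)⁻¹))
      (z r) := by
  classical
  set P := Finset.univ.filter (fun p : Fin n × Fin n => p.1 < p.2) with hP
  set F : ℝ → ℝ := fun t => μ₁ * ∑ s : Fin n, Real.log (Function.update z r t s)
      + μ₂ * ∑ p ∈ P, Real.log (Function.update z r t p.1 - Function.update z r t p.2)
    with hF
  -- derivative of F
  have hF1 : ∀ s : Fin n, HasDerivAt (fun t => Real.log (Function.update z r t s))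
      (if s = r then (z r)⁻¹ else 0) (z r) := by
    intro s
    by_cases hs : s = r
    · subst hs
      simp only [Function.update_self, if_pos rfl]
      exact Real.hasDerivAt_log (ne_of_gt (hpos s))
    · simp only [Function.update_of_ne hs, if_neg hs]
      exact hasDerivAt_const _ _
  have hF2 : ∀ p ∈ P, HasDerivAt
      (fun t => Real.log (Function.update z r t p.1 - Function.update z r t p.2))
      (if p.1 = r then (z r - z p.2)⁻¹ else if p.2 = r then (z r - z p.1)⁻¹ else 0)
      (z r) := by
    intro p hp
    have hlt : p.1 < p.2 := (Finset.mem_filter.mp hp).2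
    have hsub : 0 < z p.1 - z p.2 := sub_pos.mpr (hmono _ _ hlt)
    by_cases h1 : p.1 = r
    · have h2 : p.2 ≠ r := by rw [← h1]; exact (ne_of_gt hlt)
      have hne : z r - z p.2 ≠ 0 := by rw [← h1]; exact ne_of_gt hsub
      have hfun : (fun t => Real.log (Function.update z r t p.1 - Function.update z r t p.2))
          = fun y => Real.log (y - z p.2) := by
        funext t
        rw [Function.update_of_ne h2, h1, Function.update_self]
      rw [if_pos h1, hfun]
      have := (((hasDerivAt_id (z r)).sub_const (z p.2)).log (by simpa using hne))
      simpa [one_div] using this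
    · by_cases h2 : p.2 = r
      · have hne : z p.1 - z r ≠ 0 := by rw [← h2]; exact ne_of_gt hsub
        have hin : HasDerivAt (fun t : ℝ => z p.1 - t) (-1) (z r) := by
          simpa using (hasDerivAt_id (z r)).const_sub (z p.1)
        have hlog := hin.log (by simpa using hne)
        have hfun : (fun t => Real.log (Function.update z r t p.1 - Function.update z r t p.2))
            = fun y => Real.log (z p.1 - y) := by
          funext t
          rw [Function.update_of_ne h1, h2, Function.update_self]
        rw [if_neg h1, if_pos h2, hfun]
        have hv : (-1 : ℝ) / (z p.1 - z r) = (z r - z p.1)⁻¹ := by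
          rw [div_eq_mul_inv, neg_one_mul, ← inv_neg, neg_sub]
        rw [← hv]
        exact hlog
      · simp only [Function.update_of_ne h1, Function.update_of_ne h2, if_neg h1, if_neg h2]
        exact hasDerivAt_const _ _
  have hFd : HasDerivAt F
      (μ₁ * (z r)⁻¹ + μ₂ * ∑ p ∈ P,
        (if p.1 = r then (z r - z p.2)⁻¹ else if p.2 = r then (z r - z p.1)⁻¹ else 0))
      (z r) := by
    have hsum1 : HasDerivAt (fun t => ∑ s : Fin n, Real.log (Function.update z r t s))
        ((z r)⁻¹) (z r) := by
      have := HasDerivAt.fun_sum (fun s (_ : s ∈ Finset.univ) => hF1 s)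
      simpa [Finset.sum_ite_eq'] using this
    have hsum2 : HasDerivAt
        (fun t => ∑ p ∈ P, Real.log (Function.update z r t p.1 - Function.update z r t p.2))
        (∑ p ∈ P, (if p.1 = r then (z r - z p.2)⁻¹ else if p.2 = r then (z r - z p.1)⁻¹ else 0))
        (z r) := HasDerivAt.fun_sum (fun p hp => hF2 p hp)
    exact (hsum1.const_mul μ₁).add (hsum2.const_mul μ₂)
  have hgev : (fun t => phiA n μ₁ μ₂ (Function.update z r t))
      =ᶠ[nhds (z r)] (fun t => Real.exp (F t)) := by
    filter_upwards [eventually_good n z hpos hmono r] with t ht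
    exact phiA_eq_exp n μ₁ μ₂ (Function.update z r t) ht.1 ht.2
  have final := (hFd.exp).congr_of_eventuallyEq hgev
  have hval : Real.exp (F (z r)) = phiA n μ₁ μ₂ z := by
    rw [phiA_eq_exp n μ₁ μ₂ z hpos hmono, hF]
    simp [Function.update_eq_self, hP]
  have hDval : μ₁ * (z r)⁻¹ + μ₂ * ∑ p ∈ P,
      (if p.1 = r then (z r - z p.2)⁻¹ else if p.2 = r then (z r - z p.1)⁻¹ else 0)
      = μ₁ / z r + μ₂ * ∑ s ∈ Finset.univ.erase r, (z r - z s)⁻¹ := by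
    rw [sum_pairs_pivot r (fun s => (z r - z s)⁻¹), div_eq_mul_inv]
  rw [hval, hDval] at final
  exact final

lemma zDr_sq_phiA (n : ℕ) (μ₁ μ₂ : ℝ) (z : Fin n → ℝ) (hpos : ∀ r, 0 < z r)
    (hmono : ∀ i j : Fin n, i < j → z j < z i) (r : Fin n) :
    zDr r (zDr r (phiA n μ₁ μ₂)) z
      = (z r * (μ₁ / z r + μ₂ * ∑ s ∈ Finset.univ.erase r, (z r - z s)⁻¹)
          + (z r * (μ₁ / z r + μ₂ * ∑ s ∈ Finset.univ.erase r, (z r - z s)⁻¹))^2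
          + (z r)^2 * (-(μ₁ * ((z r)^2)⁻¹)
              - μ₂ * ∑ s ∈ Finset.univ.erase r, ((z r - z s)^2)⁻¹))
        * phiA n μ₁ μ₂ z := by
  classical
  have hne : ∀ s : Fin n, s ≠ r → z r - z s ≠ 0 := by
    intro s hs
    rcases hs.lt_or_gt with h' | h'
    · exact sub_ne_zero.mpr (ne_of_lt (hmono s r h'))
    · exact sub_ne_zero.mpr (ne_of_gt (hmono r s h'))
  set g : ℝ → ℝ := fun t => phiA n μ₁ μ₂ (Function.update z r t) with hg
  set Wf : ℝ → ℝ := fun t => μ₁ / t + μ₂ * ∑ s ∈ Finset.univ.erase r, (t - z s)⁻¹ with hWf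
  have e0 : zDr r (zDr r (phiA n μ₁ μ₂)) z = z r * deriv (fun t => t * deriv g t) (z r) := by
    unfold zDr
    have hfeq : (fun t => Function.update z r t r *
        deriv (fun u => phiA n μ₁ μ₂ (Function.update (Function.update z r t) r u))
          (Function.update z r t r)) = fun t => t * deriv g t := by
      funext t
      simp only [Function.update_self, Function.update_idem]
      rfl
    rw [hfeq]
  have hder : ∀ᶠ t in nhds (z r), deriv g t = g t * Wf t := by
    filter_upwards [eventually_good n z hpos hmono r] with t ht
    have H := hasDerivAt_phiA n μ₁ μ₂ (Function.update z r t) ht.1 ht.2 r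
    simp only [Function.update_idem, Function.update_self] at H
    have hsum : ∑ s ∈ Finset.univ.erase r, (t - Function.update z r t s)⁻¹
        = ∑ s ∈ Finset.univ.erase r, (t - z s)⁻¹ :=
      Finset.sum_congr rfl
        (fun s hs => by rw [Function.update_of_ne (Finset.mem_erase.mp hs).1])
    rw [hsum] at H
    exact H.deriv
  have hev2 : (fun t => t * deriv g t) =ᶠ[nhds (z r)] (fun t => t * (g t * Wf t)) :=
    hder.mono (fun t ht => by show t * deriv g t = t * (g t * Wf t); rw [ht])
  rw [e0, hev2.deriv_eq]
  have hgd : HasDerivAt g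
      (phiA n μ₁ μ₂ z * (μ₁ / z r + μ₂ * ∑ s ∈ Finset.univ.erase r, (z r - z s)⁻¹))
      (z r) := hasDerivAt_phiA n μ₁ μ₂ z hpos hmono r
  have h1 : HasDerivAt (fun t : ℝ => μ₁ / t) (-(μ₁ * ((z r)^2)⁻¹)) (z r) := by
    have h := (hasDerivAt_inv (ne_of_gt (hpos r))).const_mul μ₁
    have hfun : (fun t : ℝ => μ₁ / t) = fun t : ℝ => μ₁ * t⁻¹ := by
      funext t; rw [div_eq_mul_inv]
    rw [hfun]
    exact h.congr_deriv (by ring)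
  have h2 : ∀ s ∈ Finset.univ.erase r,
      HasDerivAt (fun t => (t - z s)⁻¹) (-(((z r - z s)^2)⁻¹)) (z r) := by
    intro s hs
    have hs' : s ≠ r := (Finset.mem_erase.mp hs).1
    have h := ((hasDerivAt_id (z r)).sub_const (z s)).inv (by simpa using hne s hs')
    exact h.congr_deriv (by rw [neg_div, one_div]; rfl)
  have hsum2 : HasDerivAt (fun t => ∑ s ∈ Finset.univ.erase r, (t - z s)⁻¹)
      (∑ s ∈ Finset.univ.erase r, -(((z r - z s)^2)⁻¹)) (z r) :=
    HasDerivAt.fun_sum h2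
  have hWd : HasDerivAt Wf
      (-(μ₁ * ((z r)^2)⁻¹) - μ₂ * ∑ s ∈ Finset.univ.erase r, ((z r - z s)^2)⁻¹) (z r) := by
    have h := h1.add (hsum2.const_mul μ₂)
    rw [hWf]
    exact h.congr_deriv (by rw [Finset.sum_neg_distrib]; ring)
  have hprod : HasDerivAt (fun t : ℝ => t * (g t * Wf t))
      (g (z r) * Wf (z r) + z r *
        (phiA n μ₁ μ₂ z * (μ₁ / z r + μ₂ * ∑ s ∈ Finset.univ.erase r, (z r - z s)⁻¹)
            * Wf (z r)
          + g (z r) * (-(μ₁ * ((z r)^2)⁻¹)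
              - μ₂ * ∑ s ∈ Finset.univ.erase r, ((z r - z s)^2)⁻¹)))
      (z r) := by
    exact ((hasDerivAt_id (z r)).mul (hgd.mul hWd)).congr_deriv (by simp [id])
  rw [hprod.deriv]
  have hgz : g (z r) = phiA n μ₁ μ₂ z := by
    rw [hg]
    simp [Function.update_eq_self]
  have hWfz : Wf (z r) = μ₁ / z r + μ₂ * ∑ s ∈ Finset.univ.erase r, (z r - z s)⁻¹ := rfl
  rw [hgz, hWfz]
  ring

end Aux

/-- For `z₁ > z₂ > ⋯ > zₙ > 0`, the function `φ^A` satisfies the Calogero–Sutherland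
equation `∑_r (z_r∂_{z_r})² φ^A + 2μ₂(1-μ₂)(∑_{i<j} z_iz_j/(z_i-z_j)²) φ^A
  = [nμ₁² + n(n-1)(μ₁+μ₂/2)μ₂ + 2(n choose 3)μ₂²] φ^A`. -/
theorem phiA_calogero (n : ℕ) (hn : 1 ≤ n) (μ₁ μ₂ : ℝ) (z : Fin n → ℝ)
    (hpos : ∀ r, 0 < z r) (hmono : ∀ i j : Fin n, i < j → z j < z i) :
    ∑ r : Fin n, zDr r (zDr r (phiA n μ₁ μ₂)) z
      + 2 * μ₂ * (1 - μ₂) *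
          (∑ p ∈ Finset.univ.filter (fun p : Fin n × Fin n => p.1 < p.2),
            z p.1 * z p.2 / (z p.1 - z p.2) ^ 2) * phiA n μ₁ μ₂ z
    = ((n : ℝ) * μ₁ ^ 2 + (n : ℝ) * ((n : ℝ) - 1) * (μ₁ + μ₂ / 2) * μ₂
        + 2 * (n.choose 3 : ℝ) * μ₂ ^ 2) * phiA n μ₁ μ₂ z := by
  rw [Finset.sum_congr rfl (fun r _ => zDr_sq_phiA n μ₁ μ₂ z hpos hmono r),
    ← Finset.sum_mul]
  have hs := scalar_identity n hn μ₁ μ₂ z hpos hmono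
  linear_combination (phiA n μ₁ μ₂ z) * hs
end
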